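/- arXiv:1611.03485 — 3 statements merged into one kernel-verified Lean document; each statement's English description precedes it below -/
import Mathlib

section
/- Let r>0, let n_1,n_2≥0 be integers, and let R(z)=Σ_{k=−n_1}^{n_2} σ_k z^k with σ_k∈ℂ be a Laurent polynomial; set l=n_1+n_2. Then for all 0<p<q≤∞, with m_p the unique positive integer in [p/2, 1+p/2): ‖R‖_{L^q(γ_r)} ≤ ( (m_p·l+1)/(2πr) )^{1/p−1/q} · ‖R‖_{L^p(γ_r)}. -/
set_option maxHeartbeats 1000000

open Complex MeasureTheory Polynomial Real Set

noncomputable section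

def circLp (r : ℝ) (f : ℂ → ℂ) (p : ℝ) : ℝ :=
  (∫ t in (0:ℝ)..(2 * Real.pi), ‖f ((r:ℂ) * Complex.exp (t * Complex.I))‖ ^ p * r) ^ (1/p)

def circSup (r : ℝ) (f : ℂ → ℂ) : ℝ :=
  sSup ((fun z => ‖f z‖) '' {z : ℂ | ‖z‖ = r})

lemma aux_exp_int (n : ℤ) :
    ∫ t in (0:ℝ)..(2*Real.pi), Complex.exp (n * t * Complex.I) =
      if n = 0 then (2*Real.pi : ℂ) else 0 := by
  split_ifs with h
  · subst h; simp [intervalIntegral.integral_const]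
  · have hc : (n : ℂ) * Complex.I ≠ 0 := by simp [Complex.I_ne_zero, h]
    have hint := integral_exp_mul_complex (a := (0:ℝ)) (b := 2*Real.pi) hc
    have heq : ∀ t : ℝ, (n:ℂ) * t * Complex.I = ((n:ℂ)*Complex.I) * t := fun t => by ring
    simp only [heq]
    rw [hint]
    have h1 : Complex.exp ((n:ℂ) * Complex.I * (2*Real.pi)) = 1 := by
      rw [show (n:ℂ) * Complex.I * (2*Real.pi) = n * (2*Real.pi*Complex.I) by ring]
      exact Complex.exp_int_mul_two_pi_mul_I n
    simp [h1]

lemma parseval (d : ℕ) (a : ℕ → ℂ) (r : ℝ) :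
    ∫ t in (0:ℝ)..(2*Real.pi),
        ‖∑ j ∈ Finset.range d, a j * ((r:ℂ) * Complex.exp (t*Complex.I))^j‖^2 =
      2*Real.pi * ∑ j ∈ Finset.range d, ‖a j‖^2 * r^(2*j) := by
  have key : ∀ t : ℝ,
      ((‖∑ j ∈ Finset.range d, a j * ((r:ℂ) * Complex.exp (t*Complex.I))^j‖^2 : ℝ) : ℂ)
      = ∑ j ∈ Finset.range d, ∑ k ∈ Finset.range d,
          (a j * (starRingEnd ℂ) (a k)) * (r:ℂ)^(j+k) *
            Complex.exp (((j:ℤ) - (k:ℤ)) * t * Complex.I) := by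
    intro t
    set g : ℂ := ∑ j ∈ Finset.range d, a j * ((r:ℂ) * Complex.exp (t*Complex.I))^j with hg
    have h1 : ((‖g‖^2 : ℝ) : ℂ) = g * (starRingEnd ℂ) g := by
      rw [Complex.mul_conj']
      push_cast; ring
    rw [h1, hg, map_sum, Finset.sum_mul_sum]
    refine Finset.sum_congr rfl fun j hj => Finset.sum_congr rfl fun k hk => ?_
    rw [map_mul, map_pow, map_mul, Complex.conj_ofReal]
    rw [← Complex.exp_conj]
    have hconj : (starRingEnd ℂ) ((t:ℂ) * Complex.I) = -(t * Complex.I) := by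
      simp [Complex.conj_ofReal]
    rw [hconj]
    rw [mul_pow, mul_pow, ← Complex.exp_nat_mul, ← Complex.exp_nat_mul]
    have hexp : Complex.exp ((j:ℂ) * (t*Complex.I)) * Complex.exp ((k:ℂ) * -(t*Complex.I))
        = Complex.exp (((j:ℤ) - (k:ℤ)) * t * Complex.I) := by
      rw [← Complex.exp_add]; congr 1; push_cast; ring
    rw [pow_add, ← hexp]
    ring
  have hcont : ∀ (c w : ℂ), Continuous (fun t : ℝ => c * Complex.exp (w * t * Complex.I)) := by
    intro c w
    exact continuous_const.mul (Complex.continuous_exp.comp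
      ((continuous_const.mul Complex.continuous_ofReal).mul continuous_const))
  have hhelp : ∀ (c w : ℂ), IntervalIntegrable
      (fun t : ℝ => c * Complex.exp (w * t * Complex.I)) MeasureTheory.volume 0 (2*Real.pi) :=
    fun c w => (hcont c w).intervalIntegrable _ _
  apply Complex.ofReal_injective
  rw [← intervalIntegral.integral_ofReal]
  calc (∫ t in (0:ℝ)..(2*Real.pi),
        ((‖∑ j ∈ Finset.range d, a j * ((r:ℂ) * Complex.exp (t*Complex.I))^j‖^2 : ℝ) : ℂ))
      = ∫ t in (0:ℝ)..(2*Real.pi), ∑ j ∈ Finset.range d, ∑ k ∈ Finset.range d,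
          (a j * (starRingEnd ℂ) (a k)) * (r:ℂ)^(j+k) *
            Complex.exp (((j:ℤ) - (k:ℤ)) * t * Complex.I) := by
        apply intervalIntegral.integral_congr
        intro t _
        exact key t
    _ = ∑ j ∈ Finset.range d, ∑ k ∈ Finset.range d, ∫ t in (0:ℝ)..(2*Real.pi),
          (a j * (starRingEnd ℂ) (a k)) * (r:ℂ)^(j+k) *
            Complex.exp (((j:ℤ) - (k:ℤ)) * t * Complex.I) := by
        refine (intervalIntegral.integral_finset_sum
          (fun j _ => ((continuous_finset_sum _ (fun k _ => hcont _ _)).intervalIntegrable _ _))).trans ?_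
        exact Finset.sum_congr rfl fun j _ =>
          intervalIntegral.integral_finset_sum (fun k _ => hhelp _ _)
    _ = ∑ j ∈ Finset.range d, ∑ k ∈ Finset.range d,
          (a j * (starRingEnd ℂ) (a k)) * (r:ℂ)^(j+k) *
            (if ((j:ℤ) - (k:ℤ)) = 0 then (2*Real.pi:ℂ) else 0) := by
        refine Finset.sum_congr rfl fun j _ => Finset.sum_congr rfl fun k _ => ?_
        rw [intervalIntegral.integral_const_mul]
        have h := aux_exp_int ((j:ℤ) - (k:ℤ))
        push_cast at h ⊢
        rw [h]
    _ = ∑ j ∈ Finset.range d,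
          (a j * (starRingEnd ℂ) (a j)) * (r:ℂ)^(j+j) * (2*Real.pi:ℂ) := by
        refine Finset.sum_congr rfl fun j hj => ?_
        rw [Finset.sum_eq_single j]
        · simp
        · intro k _ hkj
          have : ¬ ((j:ℤ) - (k:ℤ) = 0) := by
            simp [sub_eq_zero]
            exact fun h => hkj h.symm
          simp [this]
        · intro h; exact absurd hj h
    _ = ((2*Real.pi * ∑ j ∈ Finset.range d, ‖a j‖^2 * r^(2*j) : ℝ) : ℂ) := by
        push_cast
        rw [Finset.mul_sum]
        refine Finset.sum_congr rfl fun j _ => ?_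
        rw [Complex.mul_conj']
        push_cast
        ring

lemma sup_sq_le (d : ℕ) (a : ℕ → ℂ) (r : ℝ) (z : ℂ) (hz : ‖z‖ = r) :
    ‖∑ j ∈ Finset.range d, a j * z^j‖^2 ≤ d * ∑ j ∈ Finset.range d, ‖a j‖^2 * r^(2*j) := by
  have h1 : ‖∑ j ∈ Finset.range d, a j * z^j‖ ≤ ∑ j ∈ Finset.range d, ‖a j‖ * r^j := by
    refine (norm_sum_le _ _).trans (le_of_eq (Finset.sum_congr rfl fun j _ => ?_))
    rw [norm_mul, norm_pow]
    simp [hz]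
  have h2 : ‖∑ j ∈ Finset.range d, a j * z^j‖^2 ≤ (∑ j ∈ Finset.range d, ‖a j‖ * r^j)^2 := by
    apply pow_le_pow_left₀ (norm_nonneg _) h1 2
  refine h2.trans ?_
  have h3 := sq_sum_le_card_mul_sum_sq (s := Finset.range d) (f := fun j => ‖a j‖ * r^j)
  simpa [mul_pow, ← pow_mul, mul_comm 2, Finset.card_range] using h3

lemma poly_sup_sq (Q : Polynomial ℂ) (d : ℕ) (hd : Q.natDegree < d) (r : ℝ)
    (z : ℂ) (hz : ‖z‖ = r) :
    ‖Q.eval z‖^2 * (2*Real.pi) ≤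
      d * ∫ t in (0:ℝ)..(2*Real.pi), ‖Q.eval ((r:ℂ) * Complex.exp (t*Complex.I))‖^2 := by
  have hint : (∫ t in (0:ℝ)..(2*Real.pi), ‖Q.eval ((r:ℂ) * Complex.exp (t*Complex.I))‖^2)
      = 2*Real.pi * ∑ j ∈ Finset.range d, ‖Q.coeff j‖^2 * r^(2*j) := by
    rw [← parseval d Q.coeff r]
    apply intervalIntegral.integral_congr
    intro t _
    simp only
    rw [Polynomial.eval_eq_sum_range' hd]
  have hsup := sup_sq_le d Q.coeff r z hz
  rw [← Polynomial.eval_eq_sum_range' hd] at hsup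
  rw [hint]
  calc ‖Q.eval z‖^2 * (2*Real.pi)
      ≤ (d * ∑ j ∈ Finset.range d, ‖Q.coeff j‖^2 * r^(2*j)) * (2*Real.pi) := by
        apply mul_le_mul_of_nonneg_right hsup (by positivity)
    _ = d * (2*Real.pi * ∑ j ∈ Finset.range d, ‖Q.coeff j‖^2 * r^(2*j)) := by ring

lemma ptw_rpow {x Bd s u : ℝ} (hx : 0 ≤ x) (hxB : x ≤ Bd) (hs : 0 < s) (hsu : s ≤ u) :
    x ^ u ≤ Bd ^ (u - s) * x ^ s := by
  rcases hx.eq_or_lt with h | h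
  · rw [← h, Real.zero_rpow (by linarith : u ≠ 0), Real.zero_rpow hs.ne', mul_zero]
  · calc x ^ u = x ^ (u - s) * x ^ s := by
          rw [← Real.rpow_add h]; ring_nf
    _ ≤ Bd ^ (u - s) * x ^ s := by
        apply mul_le_mul_of_nonneg_right
          (Real.rpow_le_rpow hx hxB (by linarith)) (Real.rpow_nonneg hx _)

theorem stmt8
    (r : ℝ) (hr : 0 < r) (n1 n2 : ℕ) (σ : ℤ → ℂ)
    (R : ℂ → ℂ) (hR : ∀ z, R z = ∑ k ∈ Finset.Icc (-(n1:ℤ)) (n2:ℤ), σ k * z ^ k)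
    (l : ℕ) (hl : l = n1 + n2)
    (p : ℝ) (hp : 0 < p)
    (mp : ℕ) (hmp0 : 1 ≤ mp) (hmp1 : p / 2 ≤ (mp : ℝ)) (hmp2 : (mp : ℝ) < 1 + p / 2) :
    (∀ q : ℝ, p < q → circLp r R q ≤
        (((mp : ℝ) * l + 1) / (2 * Real.pi * r)) ^ (1/p - 1/q) * circLp r R p) ∧
      circSup r R ≤ (((mp : ℝ) * l + 1) / (2 * Real.pi * r)) ^ (1/p) * circLp r R p := by
  -- basic notation
  have hπ : (0:ℝ) < 2*Real.pi := by positivity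
  set zf : ℝ → ℂ := fun t => (r:ℂ) * Complex.exp (t * Complex.I) with hzf
  set f : ℝ → ℝ := fun t => ‖R (zf t)‖ with hf
  have hmem : ∀ t : ℝ, ‖zf t‖ = r := by
    intro t
    rw [hzf]
    simp [norm_mul, abs_of_pos hr, Complex.norm_exp_ofReal_mul_I]
  have hzf_ne : ∀ t : ℝ, zf t ≠ 0 := by
    intro t h
    have := hmem t
    rw [h] at this
    simp at this
    linarith
  -- continuity of t ↦ R (zf t)
  have hRzf : (fun t : ℝ => R (zf t)) = fun t : ℝ =>
      ∑ k ∈ Finset.Icc (-(n1:ℤ)) (n2:ℤ), σ k * ((r:ℂ)^k * Complex.exp ((k:ℂ) * (t * Complex.I))) := by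
    funext t
    rw [hR]
    refine Finset.sum_congr rfl fun k _ => ?_
    rw [hzf]
    simp only
    rw [mul_zpow, ← Complex.exp_int_mul]
  have hRcont : Continuous (fun t : ℝ => R (zf t)) := by
    rw [hRzf]
    refine continuous_finset_sum _ fun k _ => ?_
    exact continuous_const.mul (continuous_const.mul (Complex.continuous_exp.comp
      (continuous_const.mul (Complex.continuous_ofReal.mul continuous_const))))
  have hfc : Continuous f := hRcont.norm
  have hf0 : ∀ t, 0 ≤ f t := fun t => norm_nonneg _
  have hfpow : ∀ s : ℝ, 0 < s → Continuous (fun t => f t ^ s) := by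
    intro s hs
    exact Continuous.rpow_const hfc fun x => Or.inr hs.le
  -- sup facts
  set S : ℝ := circSup r R with hS
  have hsphere : {z : ℂ | ‖z‖ = r} = Metric.sphere (0:ℂ) r := by
    ext z; simp [Complex.dist_eq]
  have hRconton : ContinuousOn (fun z => ‖R z‖) {z : ℂ | ‖z‖ = r} := by
    have : ContinuousOn R {z : ℂ | ‖z‖ = r} := by
      intro z hz
      have hz0 : z ≠ 0 := by
        intro h
        rw [h] at hz
        simp at hz
        linarith [hz]
      have : ContinuousAt R z := by
        have : ContinuousAt (fun z : ℂ => ∑ k ∈ Finset.Icc (-(n1:ℤ)) (n2:ℤ), σ k * z ^ k) z := by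
          exact tendsto_finset_sum _ fun k _ =>
            continuousAt_const.mul (continuousAt_zpow₀ z k (Or.inl hz0))
        refine this.congr ?_
        filter_upwards with w
        rw [hR]
      exact this.continuousWithinAt
    exact this.norm
  have hbdd : BddAbove ((fun z => ‖R z‖) '' {z : ℂ | ‖z‖ = r}) := by
    rw [hsphere] at hRconton ⊢
    exact ((isCompact_sphere (0:ℂ) r).image_of_continuousOn hRconton).bddAbove
  have hle_S : ∀ z : ℂ, ‖z‖ = r → ‖R z‖ ≤ S :=
    fun z hz => le_csSup hbdd ⟨z, hz, rfl⟩
  have habsr : ‖((r:ℝ):ℂ)‖ = r := by simp [abs_of_pos hr]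
  have hS0 : 0 ≤ S := le_trans (norm_nonneg _) (hle_S _ habsr)
  -- polynomial setup
  set P : Polynomial ℂ := ∑ k ∈ Finset.Icc (-(n1:ℤ)) (n2:ℤ),
      Polynomial.C (σ k) * Polynomial.X ^ (k + n1).toNat with hP
  have hPdeg : P.natDegree ≤ l := by
    rw [hP, hl]
    refine Polynomial.natDegree_sum_le_of_forall_le _ _ fun k hk => ?_
    refine (Polynomial.natDegree_C_mul_le _ _).trans ?_
    rw [Polynomial.natDegree_X_pow]
    have hk2 := (Finset.mem_Icc.mp hk).2
    omega
  have hPeval : ∀ w : ℂ, w ≠ 0 → P.eval w = w ^ n1 * R w := by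
    intro w hw
    rw [hP, Polynomial.eval_finset_sum, hR, Finset.mul_sum]
    refine Finset.sum_congr rfl fun k hk => ?_
    have hk1 := (Finset.mem_Icc.mp hk).1
    have hnn : (0:ℤ) ≤ k + n1 := by omega
    rw [Polynomial.eval_mul, Polynomial.eval_C, Polynomial.eval_pow, Polynomial.eval_X]
    have : w ^ (k + (n1:ℤ)).toNat = w ^ (k + (n1:ℤ)) := by
      rw [← zpow_natCast, Int.toNat_of_nonneg hnn]
    rw [this, zpow_add₀ hw, zpow_natCast]
    ring
  set Q : Polynomial ℂ := P ^ mp with hQ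
  set d : ℕ := mp * l + 1 with hd
  have hQdeg : Q.natDegree < d := by
    rw [hQ, hd]
    have := Polynomial.natDegree_pow_le (p := P) (n := mp)
    have h2 : mp * P.natDegree ≤ mp * l := Nat.mul_le_mul_left mp hPdeg
    omega
  have hQeval : ∀ w : ℂ, w ≠ 0 → Q.eval w = w ^ (n1 * mp) * (R w) ^ mp := by
    intro w hw
    rw [hQ, Polynomial.eval_pow, hPeval w hw, mul_pow, ← pow_mul]
  have hQnorm : ∀ z : ℂ, ‖z‖ = r → ‖Q.eval z‖ = r ^ (n1*mp) * ‖R z‖ ^ mp := by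
    intro z hz
    have hz0 : z ≠ 0 := by
      intro h; rw [h] at hz; simp at hz; linarith
    rw [hQeval z hz0, norm_mul, norm_pow, norm_pow, hz]
  -- the key L² estimate
  set Ip : ℝ := ∫ t in (0:ℝ)..(2*Real.pi), f t ^ p with hIp
  have hIp0 : 0 ≤ Ip := by
    rw [hIp]
    apply intervalIntegral.integral_nonneg hπ.le
    intro t _
    exact Real.rpow_nonneg (hf0 t) p
  set u : ℝ := ((mp * 2 : ℕ) : ℝ) with hu
  have hu_eq : u = 2 * (mp:ℝ) := by rw [hu]; push_cast; ring
  have hpu : p ≤ u := by rw [hu_eq]; linarith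
  have hu0 : 0 < u := by rw [hu_eq]; have : (1:ℝ) ≤ (mp:ℝ) := by exact_mod_cast hmp0
                         linarith
  set K : ℝ := (d:ℝ) / (2*Real.pi) * (S ^ (u - p) * Ip) with hK
  have hK0 : 0 ≤ K := by
    rw [hK]
    apply mul_nonneg (by positivity)
    exact mul_nonneg (Real.rpow_nonneg hS0 _) hIp0
  have hpow_eq : ∀ x : ℝ, 0 ≤ x → (x ^ mp)^2 = x ^ u := by
    intro x hx
    rw [← pow_mul, ← Real.rpow_natCast x (mp*2), hu]
  have hkey : ∀ z : ℂ, ‖z‖ = r → ‖R z‖ ^ u ≤ K := by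
    intro z hz
    have h1 := poly_sup_sq Q d hQdeg r z hz
    set c : ℝ := (r ^ (n1*mp))^2 with hc
    have hcpos : 0 < c := by positivity
    have hint2 : (∫ t in (0:ℝ)..(2*Real.pi), ‖Q.eval ((r:ℂ) * Complex.exp (t*Complex.I))‖^2)
        = c * ∫ t in (0:ℝ)..(2*Real.pi), f t ^ u := by
      rw [← intervalIntegral.integral_const_mul]
      apply intervalIntegral.integral_congr
      intro t _
      simp only
      rw [hQnorm ((r:ℂ) * Complex.exp (t*Complex.I)) (hmem t), mul_pow, hc,
        hpow_eq _ (hf0 t)]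
    have hJ : (∫ t in (0:ℝ)..(2*Real.pi), f t ^ u) ≤ S ^ (u - p) * Ip := by
      rw [hIp, ← intervalIntegral.integral_const_mul]
      apply intervalIntegral.integral_mono_on hπ.le
        ((hfpow u hu0).intervalIntegrable _ _)
        ((continuous_const.mul (hfpow p hp)).intervalIntegrable _ _)
      intro t _
      exact ptw_rpow (hf0 t) (hle_S _ (hmem t)) hp hpu
    have h2 : (c * ‖R z‖ ^ u) * (2*Real.pi) ≤ (d:ℝ) * (c * (S ^ (u - p) * Ip)) := by
      have hL : ‖Q.eval z‖^2 * (2*Real.pi) = (c * ‖R z‖ ^ u) * (2*Real.pi) := by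
        rw [hQnorm z hz, mul_pow, hc, hpow_eq _ (norm_nonneg _)]
      have hR2 : (d:ℝ) * ∫ t in (0:ℝ)..(2*Real.pi), ‖Q.eval ((r:ℂ) * Complex.exp (t*Complex.I))‖^2
          ≤ (d:ℝ) * (c * (S ^ (u - p) * Ip)) := by
        rw [hint2]
        apply mul_le_mul_of_nonneg_left _ (Nat.cast_nonneg d)
        exact mul_le_mul_of_nonneg_left hJ hcpos.le
      calc (c * ‖R z‖ ^ u) * (2*Real.pi) = ‖Q.eval z‖^2 * (2*Real.pi) := hL.symm
        _ ≤ _ := h1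
        _ ≤ _ := hR2
    have h3 : ‖R z‖ ^ u * (2*Real.pi) ≤ (d:ℝ) * (S ^ (u - p) * Ip) := by
      have hcc : c * (‖R z‖ ^ u * (2*Real.pi)) ≤ c * ((d:ℝ) * (S ^ (u - p) * Ip)) := by
        calc c * (‖R z‖ ^ u * (2*Real.pi)) = (c * ‖R z‖ ^ u) * (2*Real.pi) := by ring
          _ ≤ (d:ℝ) * (c * (S ^ (u - p) * Ip)) := h2
          _ = c * ((d:ℝ) * (S ^ (u - p) * Ip)) := by ring
      exact (mul_le_mul_iff_of_pos_left hcpos).mp hcc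
    rw [hK]
    rw [show (d:ℝ) / (2*Real.pi) * (S ^ (u - p) * Ip)
        = ((d:ℝ) * (S ^ (u - p) * Ip)) / (2*Real.pi) by ring]
    exact (le_div_iff₀ hπ).mpr h3
  have hSu : S ^ u ≤ K := by
    have hSle : S ≤ K ^ u⁻¹ := by
      rw [hS, circSup]
      refine csSup_le ⟨‖R ((r:ℝ):ℂ)‖, Set.mem_image_of_mem _ habsr⟩ ?_
      rintro y ⟨z, hz, rfl⟩
      have h1 := hkey z hz
      calc ‖R z‖ = (‖R z‖ ^ u) ^ u⁻¹ := by
            rw [Real.rpow_rpow_inv (norm_nonneg _) hu0.ne']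
        _ ≤ K ^ u⁻¹ := Real.rpow_le_rpow (Real.rpow_nonneg (norm_nonneg _) _) h1
            (inv_nonneg.mpr hu0.le)
    calc S ^ u ≤ (K ^ u⁻¹) ^ u := Real.rpow_le_rpow hS0 hSle hu0.le
      _ = K := Real.rpow_inv_rpow hK0 hu0.ne'
  -- passing to circLp constants
  set C : ℝ := ((mp:ℝ) * l + 1) / (2 * Real.pi * r) with hC
  have hC0 : 0 < C := by
    rw [hC]
    have : (0:ℝ) < (mp:ℝ) * l + 1 := by positivity
    positivity
  have hdC : (d:ℝ) = (mp:ℝ) * l + 1 := by rw [hd]; push_cast; ring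
  set Lp : ℝ := circLp r R p with hLpdef
  have hLp : Lp = (Ip * r) ^ (1/p) := by
    rw [hLpdef, circLp, hIp, ← intervalIntegral.integral_mul_const]
  have hIpr0 : 0 ≤ Ip * r := mul_nonneg hIp0 hr.le
  have hLp0 : 0 ≤ Lp := by rw [hLp]; exact Real.rpow_nonneg hIpr0 _
  set B : ℝ := C ^ (1/p) * Lp with hB
  have hB0 : 0 ≤ B := mul_nonneg (Real.rpow_nonneg hC0.le _) hLp0
  have hSB : S ≤ B := by
    rcases hS0.eq_or_lt with h | hSpos
    · rw [← h]; exact hB0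
    · have hSp : S ^ p ≤ (d:ℝ) / (2*Real.pi) * Ip := by
        have h1 : S ^ p * S ^ (u - p) ≤ ((d:ℝ) / (2*Real.pi) * Ip) * S ^ (u - p) := by
          calc S ^ p * S ^ (u - p) = S ^ u := by
                rw [← Real.rpow_add hSpos]; ring_nf
            _ ≤ K := hSu
            _ = ((d:ℝ) / (2*Real.pi) * Ip) * S ^ (u - p) := by rw [hK]; ring
        exact le_of_mul_le_mul_right h1 (Real.rpow_pos_of_pos hSpos _)
      have hSp' : S ^ p ≤ C * (Ip * r) := by
        refine hSp.trans (le_of_eq ?_)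
        rw [hC, hdC]
        field_simp
      calc S = (S ^ p) ^ (1/p) := by
            rw [one_div, Real.rpow_rpow_inv hS0 hp.ne']
        _ ≤ (C * (Ip * r)) ^ (1/p) :=
            Real.rpow_le_rpow (Real.rpow_nonneg hS0 _) hSp' (by positivity)
        _ = C ^ (1/p) * (Ip * r) ^ (1/p) := Real.mul_rpow hC0.le hIpr0
        _ = B := by rw [hB, hLp]
  constructor
  · -- the Lq part
    intro q hq
    have hq0 : 0 < q := hp.trans hq
    set Iq : ℝ := ∫ t in (0:ℝ)..(2*Real.pi), f t ^ q with hIq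
    have hIq0 : 0 ≤ Iq := by
      rw [hIq]
      apply intervalIntegral.integral_nonneg hπ.le
      intro t _
      exact Real.rpow_nonneg (hf0 t) q
    have hLq : circLp r R q = (Iq * r) ^ (1/q) := by
      rw [circLp, hIq, ← intervalIntegral.integral_mul_const]
    have h5 : Iq ≤ B ^ (q - p) * Ip := by
      rw [hIq, hIp, ← intervalIntegral.integral_const_mul]
      apply intervalIntegral.integral_mono_on hπ.le
        ((hfpow q hq0).intervalIntegrable _ _)
        ((continuous_const.mul (hfpow p hp)).intervalIntegrable _ _)
      intro t _
      exact ptw_rpow (hf0 t) ((hle_S _ (hmem t)).trans hSB) hp hq.le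
    have h6 : Iq * r ≤ B ^ (q - p) * (Ip * r) := by
      calc Iq * r ≤ (B ^ (q - p) * Ip) * r := mul_le_mul_of_nonneg_right h5 hr.le
        _ = B ^ (q - p) * (Ip * r) := by ring
    have h7 : B ^ (q - p) * (Ip * r) = C ^ ((q-p)/p) * Lp ^ q := by
      have hIpLp : Ip * r = Lp ^ p := by
        rw [hLp, one_div, Real.rpow_inv_rpow hIpr0 hp.ne']
      rw [hB, Real.mul_rpow (Real.rpow_nonneg hC0.le _) hLp0, hIpLp,
        ← Real.rpow_mul hC0.le, mul_assoc, ← Real.rpow_add' hLp0 (by linarith [hq0] : (q-p)+p ≠ 0)]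
      have e1 : 1/p * (q-p) = (q-p)/p := by ring
      have e2 : q - p + p = q := by ring
      rw [e1, e2]
    have h8 : circLp r R q ≤ (C ^ ((q-p)/p) * Lp ^ q) ^ (1/q) := by
      rw [hLq]
      exact Real.rpow_le_rpow (mul_nonneg hIq0 hr.le) (h6.trans_eq h7) (by positivity)
    refine h8.trans (le_of_eq ?_)
    rw [Real.mul_rpow (Real.rpow_nonneg hC0.le _) (Real.rpow_nonneg hLp0 _),
      ← Real.rpow_mul hC0.le, one_div q, Real.rpow_rpow_inv hLp0 hq0.ne']
    have e3 : (q-p)/p * q⁻¹ = 1/p - 1/q := by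
      field_simp
    rw [e3, one_div q]
  · -- the sup part
    exact hSB


end
end

section
/- Let n≥1, let z_1,…,z_n∈ℂ all lie in the upper half-plane ℂ⁺ (with repetitions allowed), and let ρ_n⁺(z)=Σ_{k=1}^n 1/(z−z_k). Then: (i) for 1<p≤2, 2π·(sup_{x∈ℝ}|ρ_n⁺(x)|)^{p−1} ≥ (1/n)·cos(π(1−p/2))·∫_ℝ |ρ_n⁺(x)|^p dx; (ii) for p≥2, 2π·(sup_{x∈ℝ}|ρ_n⁺(x)|)^{p−1} ≥ (1/n)·∫_ℝ |ρ_n⁺(x)|^p dx. The same inequalities hold if all z_k lie in the lower half-plane ℂ⁻. -/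
open Complex MeasureTheory Polynomial Real Set

noncomputable section

namespace SPF15

open Filter Finset Topology

variable {n : ℕ} {z : Fin n → ℂ}


lemma trig_core {p ψ : ℝ} (hp1 : 1 ≤ p) (hp2 : p ≤ 2) (h0 : 0 ≤ ψ) (hψ : ψ ≤ π/2) :
    Real.cos (p*ψ) - Real.cos (p*(π/2)) ≤ 2 * Real.cos ψ := by
  have hπ := Real.pi_pos
  have key : Real.cos (p*ψ) - Real.cos (p*(π/2)) =
      2 * Real.sin (p*(ψ+π/2)/2) * Real.sin (p*((π/2)-ψ)/2) := by
    rw [Real.cos_sub_cos]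
    rw [show (p*ψ - p*(π/2))/2 = -(p*((π/2)-ψ)/2) by ring, Real.sin_neg]
    ring_nf
  have hs1 : Real.sin (p*(ψ+π/2)/2) ≤ 1 := Real.sin_le_one _
  have hs1' : 0 ≤ Real.sin (p*(ψ+π/2)/2) := by
    apply Real.sin_nonneg_of_nonneg_of_le_pi
    · positivity
    · nlinarith
  have hs2' : 0 ≤ Real.sin (p*((π/2)-ψ)/2) := by
    apply Real.sin_nonneg_of_nonneg_of_le_pi
    · nlinarith
    · nlinarith
  have hmono : Real.sin (p*((π/2)-ψ)/2) ≤ Real.sin ((π/2)-ψ) := by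
    rcases eq_or_lt_of_le (show p*((π/2)-ψ)/2 ≤ (π/2)-ψ by nlinarith) with h | h
    · rw [h]
    · exact le_of_lt (Real.strictMonoOn_sin ⟨by nlinarith, by nlinarith⟩ ⟨by nlinarith, by nlinarith⟩ h)
  have hcos : Real.sin ((π/2)-ψ) = Real.cos ψ := Real.sin_pi_div_two_sub ψ
  nlinarith [hs2', hs1', hs1]

lemma trig_main {p θ : ℝ} (hp1 : 1 ≤ p) (hp2 : p ≤ 2) (h0 : 0 ≤ θ) (hθ : θ ≤ π) :
    Real.cos (π * (1 - p/2)) ≤ Real.sin (p*θ + (3*(π/2) - p*(π/2))) + 2 * Real.sin θ := by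
  have hπ := Real.pi_pos
  set ψ := θ - π/2 with hψdef
  have h1 : Real.sin (p*θ + (3*(π/2) - p*(π/2))) = - Real.cos (p*ψ) := by
    rw [show p*θ + (3*(π/2) - p*(π/2)) = p*ψ + π + π/2 by ring]
    rw [Real.sin_add_pi_div_two, Real.cos_add_pi]
  have h2 : Real.sin θ = Real.cos ψ := by
    rw [show θ = ψ + π/2 by ring, Real.sin_add_pi_div_two]
  have h3 : Real.cos (π * (1 - p/2)) = - Real.cos (p*(π/2)) := by
    rw [show π * (1 - p/2) = π - p*(π/2) by ring, Real.cos_pi_sub]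
  rw [h1, h2, h3]
  have habs : Real.cos (p*ψ) = Real.cos (p*|ψ|) := by
    rcases abs_choice ψ with h | h
    · rw [h]
    · rw [h, mul_neg, Real.cos_neg]
  have := trig_core hp1 hp2 (abs_nonneg ψ) (by rw [abs_le]; constructor <;> [linarith; linarith] : |ψ| ≤ π/2)
  have hc : Real.cos ψ = Real.cos |ψ| := by
    rcases abs_choice ψ with h | h
    · rw [h]
    · rw [h, Real.cos_neg]
  rw [habs, hc]
  linarith


variable {n : ℕ} {z : Fin n → ℂ}

/-- The simple partial fraction. -/
def S (z : Fin n → ℂ) (w : ℂ) : ℂ := ∑ k, 1/(w - z k)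

lemma sub_ne_zero_of_im (hb : ∀ k, 0 < (z k).im) {w : ℂ} (hw : w.im ≤ 0) (k : Fin n) :
    w - z k ≠ 0 := by
  intro h
  have : (w - z k).im = 0 := by rw [h]; simp
  rw [Complex.sub_im] at this
  have := hb k
  linarith

lemma im_term_pos (hb : ∀ k, 0 < (z k).im) {w : ℂ} (hw : w.im ≤ 0) (k : Fin n) :
    0 < (1/(w - z k)).im := by
  rw [one_div, Complex.inv_im, Complex.sub_im]
  have h1 : 0 < -(w.im - (z k).im) := by have := hb k; linarith
  have h2 : 0 < Complex.normSq (w - z k) :=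
    Complex.normSq_pos.mpr (sub_ne_zero_of_im hb hw k)
  positivity

lemma im_S_pos (hn : 1 ≤ n) (hb : ∀ k, 0 < (z k).im) {w : ℂ} (hw : w.im ≤ 0) :
    0 < (S z w).im := by
  rw [S, Complex.im_sum]
  exact Finset.sum_pos (fun k _ => im_term_pos hb hw k)
    (Finset.univ_nonempty_iff.mpr (Fin.pos_iff_nonempty.mp hn))

lemma S_mem_slitPlane (hn : 1 ≤ n) (hb : ∀ k, 0 < (z k).im) {w : ℂ} (hw : w.im ≤ 0) :
    S z w ∈ Complex.slitPlane :=
  Or.inr (ne_of_gt (im_S_pos hn hb hw))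

lemma S_ne_zero (hn : 1 ≤ n) (hb : ∀ k, 0 < (z k).im) {w : ℂ} (hw : w.im ≤ 0) :
    S z w ≠ 0 :=
  Complex.slitPlane_ne_zero (S_mem_slitPlane hn hb hw)

lemma differentiableAt_S (hb : ∀ k, 0 < (z k).im) {w : ℂ} (hw : w.im ≤ 0) :
    DifferentiableAt ℂ (S z) w := by
  apply DifferentiableAt.fun_sum
  intro k _
  have : w - z k ≠ 0 := sub_ne_zero_of_im hb hw k
  simp only [one_div]
  exact ((differentiableAt_id.sub_const (z k)).inv this)

lemma norm_S_le (hb : ∀ k, 0 < (z k).im) {w : ℂ} :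
    ‖S z w‖ ≤ ∑ k, ‖w - z k‖⁻¹ := by
  refine (norm_sum_le _ _).trans_eq ?_
  congr 1; ext k; rw [one_div, norm_inv]

/-- lower bound on distances from the real axis -/
lemma norm_sub_ge (hb : ∀ k, 0 < (z k).im) (k : Fin n) (x : ℝ) :
    (z k).im * (1 + |x|) ≤ (1 + |(z k).re| + (z k).im) * ‖(x:ℂ) - z k‖ := by
  set a := (z k).re; set b := (z k).im
  have hb' : 0 < b := hb k
  have hnorm : |x - a| ≤ ‖(x:ℂ) - z k‖ := by
    have := Complex.abs_re_le_norm ((x:ℂ) - z k)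
    simpa [Complex.sub_re] using this
  have hnormb : b ≤ ‖(x:ℂ) - z k‖ := by
    have := Complex.abs_im_le_norm ((x:ℂ) - z k)
    rw [Complex.sub_im, Complex.ofReal_im, zero_sub, abs_neg] at this
    calc b = |b| := (abs_of_pos hb').symm
    _ ≤ _ := by simpa using this
  have hxa : |x| ≤ |a| + |x - a| := by
    calc |x| = |a + (x - a)| := by ring_nf
    _ ≤ |a| + |x-a| := abs_add_le _ _
  rcases le_total (|x - a|) b with h | h
  · nlinarith [abs_nonneg x, abs_nonneg a, abs_nonneg (x-a), hnormb]
  · nlinarith [abs_nonneg x, abs_nonneg a, abs_nonneg (x-a), hnorm,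
      norm_nonneg ((x:ℂ) - z k)]

/-- global decay bound for S on the real line -/
lemma norm_S_real_le (hb : ∀ k, 0 < (z k).im) (x : ℝ) :
    ‖S z (x:ℂ)‖ ≤ (∑ k, (1 + |(z k).re| + (z k).im)/(z k).im) * (1 + |x|)⁻¹ := by
  have h1 : (0:ℝ) < 1 + |x| := by positivity
  refine (norm_S_le hb).trans ?_
  rw [Finset.sum_mul]
  apply Finset.sum_le_sum
  intro k _
  have hb' := hb k
  have hw : (0:ℝ) < ‖(x:ℂ) - z k‖ := by
    rw [norm_pos_iff]
    exact sub_ne_zero_of_im hb (by simp) k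
  have := norm_sub_ge hb k x
  have hC : (0:ℝ) ≤ 1 + |(z k).re| + (z k).im := by positivity
  rw [show (1 + |(z k).re| + (z k).im)/(z k).im * (1 + |x|)⁻¹
      = (1 + |(z k).re| + (z k).im) / ((z k).im * (1 + |x|)) by
    field_simp]
  rw [inv_eq_one_div, div_le_div_iff₀ hw (by positivity)]
  linarith

lemma continuous_S_real (hb : ∀ k, 0 < (z k).im) :
    Continuous (fun x : ℝ => S z (x:ℂ)) := by
  apply continuous_finset_sum
  intro k _
  simp only [one_div]
  exact ((Complex.continuous_ofReal.sub continuous_const).inv₀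
    (fun x => sub_ne_zero_of_im hb (by simp) k))


def K (z : Fin n → ℂ) : ℝ := ∑ k, (1 + |(z k).re| + (z k).im)/(z k).im

lemma K_nonneg (hb : ∀ k, 0 < (z k).im) : 0 ≤ K z := by
  apply Finset.sum_nonneg
  intro k _
  have := hb k
  positivity

lemma integrable_one_add_abs_rpow {p : ℝ} (hp : 1 < p) :
    Integrable (fun x : ℝ => (1 + |x|) ^ (-p)) := by
  have : ((Module.finrank ℝ ℝ : ℝ)) < p := by
    simpa [Module.finrank_self] using hp
  simpa [Real.norm_eq_abs] using integrable_one_add_norm (E := ℝ) this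

lemma integrable_majorant {p : ℝ} (hp : 1 < p) (C : ℝ) :
    Integrable (fun x : ℝ => C * (1 + |x|) ^ (-p)) :=
  (integrable_one_add_abs_rpow hp).const_mul C

lemma norm_S_rpow_le (hb : ∀ k, 0 < (z k).im) {p : ℝ} (hp : 0 ≤ p) (x : ℝ) :
    ‖S z (x:ℂ)‖ ^ p ≤ (K z) ^ p * (1 + |x|) ^ (-p) := by
  have h1 : (0:ℝ) < 1 + |x| := by positivity
  calc ‖S z (x:ℂ)‖ ^ p ≤ (K z * (1 + |x|)⁻¹) ^ p :=
        Real.rpow_le_rpow (norm_nonneg _) (norm_S_real_le hb x) hp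
  _ = (K z) ^ p * (1 + |x|) ^ (-p) := by
      rw [Real.mul_rpow (K_nonneg hb) (by positivity),
        Real.inv_rpow (le_of_lt h1), ← Real.rpow_neg (le_of_lt h1)]

lemma integrable_norm_S_rpow (hb : ∀ k, 0 < (z k).im) {p : ℝ} (hp : 1 < p) :
    Integrable (fun x : ℝ => ‖S z (x:ℂ)‖ ^ p) := by
  apply (integrable_majorant hp ((K z)^p)).mono'
  · exact ((continuous_S_real hb).norm.rpow_const
      (fun x => Or.inr (by linarith))).aestronglyMeasurable
  · filter_upwards with x
    rw [Real.norm_eq_abs, _root_.abs_of_nonneg (Real.rpow_nonneg (norm_nonneg _) _)]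
    exact norm_S_rpow_le hb (by linarith) x

lemma norm_cpow_S (hn : 1 ≤ n) (hb : ∀ k, 0 < (z k).im) (p : ℝ) (x : ℝ) :
    ‖(S z (x:ℂ)) ^ (p:ℂ)‖ = ‖S z (x:ℂ)‖ ^ p := by
  rw [Complex.norm_cpow_real]

lemma continuous_cpow_S (hn : 1 ≤ n) (hb : ∀ k, 0 < (z k).im) (p : ℝ) :
    Continuous (fun x : ℝ => (S z (x:ℂ)) ^ (p:ℂ)) := by
  rw [continuous_iff_continuousAt]
  intro x
  exact ((continuous_S_real hb).continuousAt).cpow continuousAt_const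
    (S_mem_slitPlane hn hb (by simp))

lemma integrable_cpow_S (hn : 1 ≤ n) (hb : ∀ k, 0 < (z k).im) {p : ℝ} (hp : 1 < p) :
    Integrable (fun x : ℝ => (S z (x:ℂ)) ^ (p:ℂ)) := by
  apply (integrable_majorant hp ((K z)^p)).mono'
  · exact (continuous_cpow_S hn hb p).aestronglyMeasurable
  · filter_upwards with x
    rw [norm_cpow_S hn hb p x]
    exact norm_S_rpow_le hb (by linarith) x

lemma im_term_eq (hb : ∀ k, 0 < (z k).im) (k : Fin n) (x : ℝ) :
    (1/((x:ℂ) - z k)).im = (z k).im / Complex.normSq ((x:ℂ) - z k) := by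
  rw [one_div, Complex.inv_im, Complex.sub_im, Complex.ofReal_im]
  ring_nf

lemma integrable_im_term (hb : ∀ k, 0 < (z k).im) (k : Fin n) :
    Integrable (fun x : ℝ => (1/((x:ℂ) - z k)).im) := by
  have hb' := hb k
  apply (integrable_majorant (p := 2) one_lt_two
    ((1 + |(z k).re| + (z k).im)^2 / (z k).im)).mono'
  · apply Continuous.aestronglyMeasurable
    apply Complex.continuous_im.comp
    simp only [one_div]
    exact ((Complex.continuous_ofReal.sub continuous_const).inv₀
      (fun x => sub_ne_zero_of_im hb (by simp) k))
  · filter_upwards with x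
    have h1 : (0:ℝ) < 1 + |x| := by positivity
    have h2 := norm_sub_ge hb k x
    have h3 : (0:ℝ) < Complex.normSq ((x:ℂ) - z k) :=
      Complex.normSq_pos.mpr (sub_ne_zero_of_im hb (by simp) k)
    rw [im_term_eq hb k x, Real.norm_eq_abs, _root_.abs_of_nonneg (by positivity)]
    have hnormsq : Complex.normSq ((x:ℂ) - z k) = ‖(x:ℂ) - z k‖^2 := by
      rw [← Complex.sq_norm (((x:ℂ) - z k))]
    rw [Real.rpow_neg (le_of_lt h1), Real.rpow_two]
    rw [div_le_iff₀ h3, hnormsq]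
    have key : ((z k).im * (1 + |x|))^2 ≤ ((1 + |(z k).re| + (z k).im) * ‖(x:ℂ) - z k‖)^2 := by
      apply sq_le_sq' _ h2
      nlinarith [norm_nonneg ((x:ℂ) - z k), abs_nonneg (z k).re, abs_nonneg x]
    have hinv : ((1 + |x|) ^ 2)⁻¹ * ((1+|x|)^2) = 1 := by
      field_simp
    calc (z k).im = ((1 + |(z k).re| + (z k).im) ^ 2 / (z k).im * ((1 + |x|) ^ 2)⁻¹)
          * ((z k).im^2 * (1+|x|)^2) / ((1 + |(z k).re| + (z k).im) ^ 2) := by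
          field_simp
    _ ≤ _ := by
        rw [div_le_iff₀ (by positivity)]
        have expand : ((z k).im * (1 + |x|))^2 = (z k).im^2*(1+|x|)^2 := by ring
        rw [expand] at key
        have := mul_le_mul_of_nonneg_left key
          (le_of_lt (show (0:ℝ) < (1 + |(z k).re| + (z k).im) ^ 2 / (z k).im * ((1 + |x|) ^ 2)⁻¹ by positivity))
        calc ((1 + |(z k).re| + (z k).im) ^ 2 / (z k).im * ((1 + |x|) ^ 2)⁻¹)
              * ((z k).im^2 * (1+|x|)^2)
            ≤ ((1 + |(z k).re| + (z k).im) ^ 2 / (z k).im * ((1 + |x|) ^ 2)⁻¹)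
              * (((1 + |(z k).re| + (z k).im) * ‖(x:ℂ) - z k‖)^2) := this
        _ = ((1 + |(z k).re| + (z k).im) ^ 2 / (z k).im * ((1 + |x|) ^ 2)⁻¹ * ‖↑x - z k‖ ^ 2)
              * (1 + |(z k).re| + (z k).im) ^ 2 := by ring


lemma integral_im_term (hb : ∀ k, 0 < (z k).im) (k : Fin n) :
    ∫ x : ℝ, (1/((x:ℂ) - z k)).im = π := by
  set a := (z k).re with ha
  set b := (z k).im with hbdef
  have hb' : 0 < b := hb k
  have him : ∀ x : ℝ, (1/((x:ℂ) - z k)).im = b / ((x - a)*(x - a) + (0-b)*(0-b)) := by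
    intro x
    rw [im_term_eq hb k, Complex.normSq_apply, Complex.sub_re, Complex.sub_im,
      Complex.ofReal_re, Complex.ofReal_im]
  clear_value a b
  have hderiv : ∀ x : ℝ, HasDerivAt (fun x : ℝ => Real.arctan ((x - a)/b))
      ((1/((x:ℂ) - z k)).im) x := by
    intro x
    have h1 : HasDerivAt (fun x : ℝ => (x - a)/b) (1/b) x := by
      simpa using ((hasDerivAt_id x).sub_const a).div_const b
    have h2 := (Real.hasDerivAt_arctan ((x - a)/b)).comp x h1
    refine h2.congr_deriv ?_
    symm
    rw [him x]
    have hd : (0:ℝ) < (x - a)*(x - a) + (0 - b)*(0 - b) := by nlinarith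
    have hD : (b ^ 2 - x * a * 2 + x ^ 2 + a ^ 2) ≠ 0 := by nlinarith
    field_simp [hD]
    rw [div_eq_iff (by nlinarith : ((x - a) ^ 2 + (0 - b) ^ 2) ≠ 0)]
    ring
  have htop : Tendsto (fun x : ℝ => Real.arctan ((x - a)/b)) atTop (𝓝 (π/2)) := by
    apply (Real.tendsto_arctan_atTop.mono_right nhdsWithin_le_nhds).comp
    exact (tendsto_atTop_add_const_right atTop (-a) tendsto_id).atTop_div_const hb'
  have hbot : Tendsto (fun x : ℝ => Real.arctan ((x - a)/b)) atBot (𝓝 (-(π/2))) := by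
    apply (Real.tendsto_arctan_atBot.mono_right nhdsWithin_le_nhds).comp
    apply Tendsto.atBot_div_const hb'
    simpa [sub_eq_add_neg] using (tendsto_atBot_add_const_right atBot (-a) tendsto_id)
  rw [MeasureTheory.integral_of_hasDerivAt_of_tendsto hderiv
    (integrable_im_term hb k) hbot htop]
  ring

lemma integral_im_S (hb : ∀ k, 0 < (z k).im) :
    ∫ x : ℝ, (S z (x:ℂ)).im = n * π := by
  have : (fun x : ℝ => (S z (x:ℂ)).im) = (fun x : ℝ => ∑ k, (1/((x:ℂ) - z k)).im) := by
    funext x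
    rw [S, Complex.im_sum]
  rw [this, MeasureTheory.integral_finset_sum _ (fun k _ => integrable_im_term hb k)]
  rw [Finset.sum_congr rfl (fun k _ => integral_im_term hb k)]
  simp [Finset.sum_const]

lemma integrable_im_S (hb : ∀ k, 0 < (z k).im) :
    Integrable (fun x : ℝ => (S z (x:ℂ)).im) := by
  have : (fun x : ℝ => (S z (x:ℂ)).im) = (fun x : ℝ => ∑ k, (1/((x:ℂ) - z k)).im) := by
    funext x
    rw [S, Complex.im_sum]
  rw [this]
  exact MeasureTheory.integrable_finset_sum _ (fun k _ => integrable_im_term hb k)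


lemma norm_S_le_of_dist (hb : ∀ k, 0 < (z k).im) {ξ : ℂ} {c : ℝ} (hc : 0 < c)
    (h : ∀ k, c ≤ ‖ξ - z k‖) : ‖S z ξ‖ ≤ n * c⁻¹ := by
  refine (norm_S_le hb).trans ?_
  calc ∑ k, ‖ξ - z k‖⁻¹ ≤ ∑ _k : Fin n, c⁻¹ :=
        Finset.sum_le_sum (fun k _ => inv_anti₀ hc (h k))
  _ = n * c⁻¹ := by simp [mul_comm]

lemma norm_cpow_S_any (hn : 1 ≤ n) (hb : ∀ k, 0 < (z k).im) (p : ℝ) (ξ : ℂ) :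
    ‖(S z ξ) ^ (p:ℂ)‖ = ‖S z ξ‖ ^ p := by
  rw [Complex.norm_cpow_real]

lemma integral_cpow_S_eq_zero (hn : 1 ≤ n) (hb : ∀ k, 0 < (z k).im) {p : ℝ}
    (hp1 : 1 < p) : ∫ x : ℝ, (S z (x:ℂ)) ^ (p:ℂ) = 0 := by
  set A := ∑ k, |(z k).re| with hA
  have hA0 : 0 ≤ A := Finset.sum_nonneg (fun k _ => abs_nonneg _)
  have hAk : ∀ k, |(z k).re| ≤ A := fun k =>
    Finset.single_le_sum (fun k _ => abs_nonneg ((z k).re)) (Finset.mem_univ k)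
  set Φ := fun w : ℂ => (S z w) ^ (p:ℂ) with hΦ
  have hdiff : ∀ w : ℂ, w.im ≤ 0 → DifferentiableAt ℂ Φ w := fun w hw =>
    (differentiableAt_S hb hw).cpow (differentiableAt_const _)
      (S_mem_slitPlane hn hb hw)
  have hint : Integrable (fun x : ℝ => Φ (x:ℂ)) := integrable_cpow_S hn hb hp1
  have hG : Tendsto (fun R : ℝ => ∫ x in (-R)..R, Φ (x:ℂ)) atTop
      (𝓝 (∫ x : ℝ, Φ (x:ℂ))) :=
    intervalIntegral_tendsto_integral hint tendsto_neg_atTop_atBot tendsto_id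
  have hbound : ∀ᶠ R in atTop, ‖∫ x in (-R)..R, Φ (x:ℂ)‖ ≤ 4 * (2*n)^p * R^(1-p) := by
    filter_upwards [eventually_ge_atTop (max (2*A) 1)] with R hR
    have hR1 : (1:ℝ) ≤ R := le_trans (le_max_right _ _) hR
    have hR0 : (0:ℝ) < R := lt_of_lt_of_le one_pos hR1
    have hRA : A ≤ R/2 := by
      have := le_trans (le_max_left (2*A) 1) hR; linarith
    have hc : (0:ℝ) < R - A := by linarith
    have hhalf : R/2 ≤ R - A := by linarith
    -- side bound
    have hside : ∀ ξ : ℂ, (∀ k, R - A ≤ ‖ξ - z k‖) → ‖Φ ξ‖ ≤ (2*n/R)^p := by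
      intro ξ hξ
      rw [norm_cpow_S_any hn hb p ξ]
      apply Real.rpow_le_rpow (norm_nonneg _) _ (by linarith)
      refine (norm_S_le_of_dist hb hc hξ).trans ?_
      have hinv : (R - A)⁻¹ ≤ 2 * R⁻¹ := by
        calc (R - A)⁻¹ ≤ (R/2)⁻¹ := by apply inv_anti₀ (by linarith) hhalf
        _ = 2 * R⁻¹ := by rw [div_eq_mul_inv, mul_inv, inv_inv, mul_comm]
      calc (n:ℝ) * (R - A)⁻¹ ≤ (n:ℝ) * (2 * R⁻¹) :=
            mul_le_mul_of_nonneg_left hinv (by positivity)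
      _ = 2 * n / R := by rw [div_eq_mul_inv]; ring
    -- distances on the three sides
    have hbot : ∀ x : ℝ, ∀ k, R - A ≤ ‖((x:ℂ) + (-R:ℝ)*I) - z k‖ := by
      intro x k
      have h1 : |(((x:ℂ) + (-R:ℝ)*I) - z k).im| ≤ ‖((x:ℂ) + (-R:ℝ)*I) - z k‖ := by
        simpa using Complex.abs_im_le_norm (((x:ℂ) + (-R:ℝ)*I) - z k)
      have h2 : (((x:ℂ) + (-R:ℝ)*I) - z k).im = -R - (z k).im := by simp
      have := hb k
      rw [h2] at h1
      calc R - A ≤ R := by linarith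
      _ ≤ |-R - (z k).im| := by
            rw [abs_sub_comm, _root_.abs_of_nonneg (by linarith : (0:ℝ) ≤ (z k).im - -R)]
            linarith
      _ ≤ _ := h1
    have hvert : ∀ (c : ℝ), |c| = R → ∀ y : ℝ, ∀ k, R - A ≤ ‖((c:ℂ) + (y:ℝ)*I) - z k‖ := by
      intro c hcR y k
      have h1 : |(((c:ℂ) + (y:ℝ)*I) - z k).re| ≤ ‖((c:ℂ) + (y:ℝ)*I) - z k‖ := by
        simpa using Complex.abs_re_le_norm (((c:ℂ) + (y:ℝ)*I) - z k)
      have h2 : (((c:ℂ) + (y:ℝ)*I) - z k).re = c - (z k).re := by simp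
      rw [h2] at h1
      refine le_trans ?_ h1
      have := hAk k
      have habs : R - |(z k).re| ≤ |c - (z k).re| := by
        have h3 := abs_sub_abs_le_abs_sub c ((z k).re)
        rw [hcR] at h3; linarith
      linarith
    -- Cauchy on the rectangle
    have hrect := Complex.integral_boundary_rect_eq_zero_of_differentiableOn Φ
      ⟨-R, -R⟩ ⟨R, 0⟩ ?rect
    case rect =>
      intro w hw
      rw [Complex.mem_reProdIm] at hw
      have : w.im ≤ 0 := by
        have h2 := hw.2
        simp only [show ((⟨-R, -R⟩:ℂ)).im = -R from rfl,
          show ((⟨R, 0⟩:ℂ)).im = (0:ℝ) from rfl] at h2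
        rw [Set.uIcc_of_le (by linarith : -R ≤ (0:ℝ))] at h2
        exact h2.2
      exact (hdiff w this).differentiableWithinAt
    -- identify the top edge with the real integral
    have htopeq : (∫ x : ℝ in (-R)..R, Φ ((x:ℂ) + (0:ℝ)*I)) = ∫ x in (-R)..R, Φ (x:ℂ) := by
      congr 1
      funext x
      norm_num
    rw [htopeq] at hrect
    have hGR : (∫ x in (-R)..R, Φ (x:ℂ))
        = (∫ x : ℝ in (-R)..R, Φ ((x:ℂ) + (-R:ℝ)*I))
          + I • (∫ y : ℝ in (-R)..(0:ℝ), Φ ((R:ℝ) + (y:ℝ)*I))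
          - I • (∫ y : ℝ in (-R)..(0:ℝ), Φ ((-R:ℝ) + (y:ℝ)*I)) := by
      have := hrect
      push_cast at this ⊢
      linear_combination -this
    rw [hGR]
    have C0 : (0:ℝ) ≤ (2*n/R)^p := Real.rpow_nonneg (by positivity) p
    have nb : ‖∫ x : ℝ in (-R)..R, Φ ((x:ℂ) + (-R:ℝ)*I)‖ ≤ (2*n/R)^p * (2*R) := by
      have := intervalIntegral.norm_integral_le_of_norm_le_const
        (C := (2*n/R)^p) (f := fun x : ℝ => Φ ((x:ℂ) + (-R:ℝ)*I)) (a := -R) (b := R)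
        (fun x _ => hside _ (hbot x))
      calc ‖∫ x : ℝ in (-R)..R, Φ ((x:ℂ) + (-R:ℝ)*I)‖ ≤ (2*n/R)^p * |R - (-R)| := this
      _ = (2*n/R)^p * (2*R) := by
            rw [_root_.abs_of_nonneg (by linarith : (0:ℝ) ≤ R - -R)]; ring
    have nr : ‖I • ∫ y : ℝ in (-R)..(0:ℝ), Φ ((R:ℝ) + (y:ℝ)*I)‖ ≤ (2*n/R)^p * R := by
      rw [norm_smul, Complex.norm_I, one_mul]
      have := intervalIntegral.norm_integral_le_of_norm_le_const
        (C := (2*n/R)^p) (f := fun y : ℝ => Φ ((R:ℝ) + (y:ℝ)*I)) (a := -R) (b := 0)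
        (fun y _ => hside _ (hvert R (_root_.abs_of_pos hR0) y))
      calc _ ≤ (2*n/R)^p * |0 - (-R)| := this
      _ = (2*n/R)^p * R := by rw [zero_sub, neg_neg, _root_.abs_of_pos hR0]
    have nl : ‖I • ∫ y : ℝ in (-R)..(0:ℝ), Φ ((-R:ℝ) + (y:ℝ)*I)‖ ≤ (2*n/R)^p * R := by
      rw [norm_smul, Complex.norm_I, one_mul]
      have := intervalIntegral.norm_integral_le_of_norm_le_const
        (C := (2*n/R)^p) (f := fun y : ℝ => Φ ((-R:ℝ) + (y:ℝ)*I)) (a := -R) (b := 0)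
        (fun y _ => hside _ (hvert (-R) (by rw [abs_neg, _root_.abs_of_pos hR0]) y))
      calc _ ≤ (2*n/R)^p * |0 - (-R)| := this
      _ = (2*n/R)^p * R := by rw [zero_sub, neg_neg, _root_.abs_of_pos hR0]
    have final : (2*n/R)^p * (2*R) + (2*n/R)^p * R + (2*n/R)^p * R = 4 * (2*n)^p * R^(1-p) := by
      rw [Real.div_rpow (by positivity) (le_of_lt hR0)]
      rw [Real.rpow_sub hR0, Real.rpow_one]
      field_simp [ne_of_gt (Real.rpow_pos_of_pos hR0 p)]
      ring
    calc ‖_ + _ - _‖ ≤ ‖(∫ x : ℝ in (-R)..R, Φ ((x:ℂ) + (-R:ℝ)*I))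
          + I • (∫ y : ℝ in (-R)..(0:ℝ), Φ ((R:ℝ) + (y:ℝ)*I))‖
          + ‖I • (∫ y : ℝ in (-R)..(0:ℝ), Φ ((-R:ℝ) + (y:ℝ)*I))‖ := norm_sub_le _ _
    _ ≤ ‖(∫ x : ℝ in (-R)..R, Φ ((x:ℂ) + (-R:ℝ)*I))‖
          + ‖I • (∫ y : ℝ in (-R)..(0:ℝ), Φ ((R:ℝ) + (y:ℝ)*I))‖
          + ‖I • (∫ y : ℝ in (-R)..(0:ℝ), Φ ((-R:ℝ) + (y:ℝ)*I))‖ := by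
        have := norm_add_le (∫ x : ℝ in (-R)..R, Φ ((x:ℂ) + (-R:ℝ)*I))
          (I • (∫ y : ℝ in (-R)..(0:ℝ), Φ ((R:ℝ) + (y:ℝ)*I)))
        linarith
    _ ≤ (2*n/R)^p * (2*R) + (2*n/R)^p * R + (2*n/R)^p * R := by linarith
    _ = 4 * (2*n)^p * R^(1-p) := final
  have hlim : Tendsto (fun R : ℝ => 4 * (2*(n:ℝ))^p * R^(1-p)) atTop (𝓝 0) := by
    have h1 : Tendsto (fun R : ℝ => R^(-(p-1))) atTop (𝓝 0) :=
      tendsto_rpow_neg_atTop (by linarith)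
    have h2 : (fun R : ℝ => 4 * (2*(n:ℝ))^p * R^(1-p))
        = fun R => 4 * (2*(n:ℝ))^p * R^(-(p-1)) := by
      funext R; rw [show (1-p) = -(p-1) by ring]
    rw [h2]
    simpa using h1.const_mul (4 * (2*(n:ℝ))^p)
  have : ‖∫ x : ℝ, Φ (x:ℂ)‖ ≤ 0 :=
    le_of_tendsto_of_tendsto hG.norm hlim hbound
  exact norm_le_zero_iff.mp this


lemma bddAbove_range_S (hb : ∀ k, 0 < (z k).im) :
    BddAbove (Set.range fun x : ℝ => ‖S z (x:ℂ)‖) := by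
  refine ⟨∑ k, ((z k).im)⁻¹, ?_⟩
  rintro - ⟨x, rfl⟩
  refine (norm_S_le hb).trans (Finset.sum_le_sum fun k _ => ?_)
  have hbk := hb k
  apply inv_anti₀ hbk
  have h1 : |((x:ℂ) - z k).im| ≤ ‖(x:ℂ) - z k‖ := by
    simpa using Complex.abs_im_le_norm ((x:ℂ) - z k)
  have h2 : ((x:ℂ) - z k).im = -(z k).im := by simp
  rw [h2, abs_neg, _root_.abs_of_pos hbk] at h1
  exact h1

def M (z : Fin n → ℂ) : ℝ := sSup (Set.range fun x : ℝ => ‖S z (x:ℂ)‖)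

lemma le_M (hb : ∀ k, 0 < (z k).im) (x : ℝ) : ‖S z (x:ℂ)‖ ≤ M z :=
  le_csSup (bddAbove_range_S hb) ⟨x, rfl⟩

lemma im_le_norm (w : ℂ) : w.im ≤ ‖w‖ := by
  have := Complex.abs_im_le_norm w
  exact le_trans (le_abs_self _) this

lemma M_pos (hn : 1 ≤ n) (hb : ∀ k, 0 < (z k).im) : 0 < M z :=
  lt_of_lt_of_le (lt_of_lt_of_le (im_S_pos hn hb (by simp : ((0:ℝ):ℂ).im ≤ 0))
    (im_le_norm _)) (le_M hb 0)

lemma pointwise_key (hn : 1 ≤ n) (hb : ∀ k, 0 < (z k).im) {p : ℝ}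
    (hp1 : 1 < p) (hp2 : p ≤ 2) (x : ℝ) :
    Real.cos (π * (1 - p/2)) * ‖S z (x:ℂ)‖ ^ p ≤
      (Complex.exp ((3*(π/2) - p*(π/2) : ℝ) * I) * (S z (x:ℂ)) ^ (p:ℂ)).im
        + 2 * (M z) ^ (p-1) * (S z (x:ℂ)).im := by
  set w := S z (x:ℂ) with hw
  set α := (3*(π/2) - p*(π/2) : ℝ) with hα
  have hw0 : w ≠ 0 := S_ne_zero hn hb (by simp)
  have hwim : 0 < w.im := im_S_pos hn hb (by simp)
  set r := ‖w‖ with hr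
  have hr0 : 0 < r := norm_pos_iff.mpr hw0
  set θ := Complex.arg w with hθ
  have hsin : Real.sin θ = w.im / r := Complex.sin_arg w
  have him : w.im = r * Real.sin θ := by rw [hsin]; field_simp
  have hθπ : θ ≤ π := Complex.arg_le_pi w
  have hθ0 : 0 < θ := by
    by_contra h
    push_neg at h
    have h1 : Real.sin θ ≤ 0 := by
      apply Real.sin_nonpos_of_nonpos_of_neg_pi_le h
      linarith [Complex.neg_pi_lt_arg w]
    nlinarith [hsin, div_pos hwim hr0]
  have hθπ' : θ < π := by
    rcases lt_or_eq_of_le hθπ with h | h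
    · exact h
    · exfalso
      have : Real.sin θ = 0 := by rw [h]; exact Real.sin_pi
      nlinarith [hsin, div_pos hwim hr0]
  -- compute the imaginary part
  have hexp : Complex.exp ((α:ℝ) * I) * w ^ (p:ℂ)
      = Complex.exp (((Real.log r * p : ℝ) : ℂ) + ((p*θ + α : ℝ) : ℂ) * I) := by
    rw [Complex.cpow_def_of_ne_zero hw0, ← Complex.exp_add]
    congr 1
    rw [Complex.log]
    push_cast
    rw [hθ, hr]
    ring_nf
  have him2 : (Complex.exp ((α:ℝ) * I) * w ^ (p:ℂ)).im = r ^ p * Real.sin (p*θ + α) := by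
    rw [hexp, Complex.exp_im]
    have h1 : ((((Real.log r * p : ℝ) : ℂ)) + ((p*θ + α : ℝ) : ℂ) * I).re = Real.log r * p := by
      simp
    have h2 : ((((Real.log r * p : ℝ) : ℂ)) + ((p*θ + α : ℝ) : ℂ) * I).im = p*θ + α := by
      simp
    rw [h1, h2, ← Real.rpow_def_of_pos hr0]
  rw [him2, him]
  -- now a real inequality
  have htrig := trig_main (le_of_lt hp1) hp2 (le_of_lt hθ0) hθπ
  have hrM : r ≤ M z := by rw [hr]; exact le_M hb x
  have hrp : r ^ (p-1) ≤ (M z) ^ (p-1) :=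
    Real.rpow_le_rpow (le_of_lt hr0) hrM (by linarith)
  have hsinθ : 0 < Real.sin θ := Real.sin_pos_of_pos_of_lt_pi hθ0 hθπ'
  have hnorm_eq : ‖w‖ = r := rfl
  show Real.cos (π * (1 - p/2)) * r ^ p ≤ _
  have hrpp : r ^ p = r ^ (p-1) * r := by
    rw [← Real.rpow_add_one (ne_of_gt hr0)]
    ring_nf
  have hrp_pos : (0:ℝ) < r ^ p := Real.rpow_pos_of_pos hr0 p
  calc Real.cos (π * (1 - p/2)) * r ^ p
      ≤ (Real.sin (p*θ + α) + 2 * Real.sin θ) * r ^ p := by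
        apply mul_le_mul_of_nonneg_right htrig (le_of_lt hrp_pos)
  _ = r ^ p * Real.sin (p*θ + α) + 2 * (r^(p-1)) * (r * Real.sin θ) := by
        rw [hrpp]; ring
  _ ≤ r ^ p * Real.sin (p*θ + α) + 2 * (M z)^(p-1) * (r * Real.sin θ) := by
        have : (0:ℝ) < r * Real.sin θ := by positivity
        nlinarith [hrp]

lemma master (hn : 1 ≤ n) (hb : ∀ k, 0 < (z k).im) {p : ℝ}
    (hp1 : 1 < p) (hp2 : p ≤ 2) :
    Real.cos (π * (1 - p/2)) * (∫ x : ℝ, ‖S z (x:ℂ)‖ ^ p) ≤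
      2 * π * n * (M z) ^ (p-1) := by
  set α := (3*(π/2) - p*(π/2) : ℝ) with hα
  have hint1 : Integrable (fun x : ℝ => (Complex.exp ((α:ℝ) * I) * (S z (x:ℂ)) ^ (p:ℂ)).im) := by
    have h := ((integrable_cpow_S hn hb hp1).const_mul (Complex.exp ((α:ℝ) * I))).im
    simpa [RCLike.im_eq_complex_im] using h
  have hint2 : Integrable (fun x : ℝ => 2 * (M z) ^ (p-1) * (S z (x:ℂ)).im) :=
    (integrable_im_S hb).const_mul _
  have hmono := MeasureTheory.integral_mono
    ((integrable_norm_S_rpow hb hp1).const_mul (Real.cos (π * (1 - p/2))))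
    (hint1.add hint2) (fun x => pointwise_key hn hb hp1 hp2 x)
  rw [MeasureTheory.integral_const_mul] at hmono
  simp only [Pi.add_apply] at hmono
  rw [MeasureTheory.integral_add hint1 hint2] at hmono
  have he1 : (∫ x : ℝ, (Complex.exp ((α:ℝ) * I) * (S z (x:ℂ)) ^ (p:ℂ)).im) = 0 := by
    have h := _root_.integral_im ((integrable_cpow_S hn hb hp1).const_mul
      (Complex.exp ((α:ℝ) * I)))
    rw [RCLike.im_eq_complex_im] at h
    have h2 : (∫ x : ℝ, Complex.exp ((α:ℝ) * I) * (S z (x:ℂ)) ^ (p:ℂ))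
        = Complex.exp ((α:ℝ) * I) * ∫ x : ℝ, (S z (x:ℂ)) ^ (p:ℂ) :=
      MeasureTheory.integral_const_mul _ _
    rw [h, h2, integral_cpow_S_eq_zero hn hb hp1, mul_zero]
    simp
  have he2 : (∫ x : ℝ, 2 * (M z) ^ (p-1) * (S z (x:ℂ)).im)
      = 2 * (M z) ^ (p-1) * (n * π) := by
    rw [MeasureTheory.integral_const_mul, integral_im_S hb]
  rw [he1, he2] at hmono
  calc Real.cos (π * (1 - p/2)) * (∫ x : ℝ, ‖S z (x:ℂ)‖ ^ p) ≤ 0 + 2 * (M z) ^ (p-1) * (n * π) := hmono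
  _ = 2 * π * n * (M z) ^ (p-1) := by ring


lemma final (hn : 1 ≤ n) (hb : ∀ k, 0 < (z k).im) :
    (∀ p : ℝ, 1 < p → p ≤ 2 →
      (1 / (n:ℝ)) * Real.cos (Real.pi * (1 - p/2)) * (∫ x : ℝ, ‖S z (x:ℂ)‖ ^ p) ≤
        2 * Real.pi * (M z) ^ (p - 1)) ∧
    (∀ p : ℝ, 2 ≤ p →
      (1 / (n:ℝ)) * (∫ x : ℝ, ‖S z (x:ℂ)‖ ^ p) ≤
        2 * Real.pi * (M z) ^ (p - 1)) := by
  have hn0 : (0:ℝ) < n := by exact_mod_cast hn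
  have hninv : (0:ℝ) ≤ 1/(n:ℝ) := by positivity
  constructor
  · intro p hp1 hp2
    have h := master hn hb hp1 hp2
    calc (1 / (n:ℝ)) * Real.cos (π * (1 - p/2)) * (∫ x : ℝ, ‖S z (x:ℂ)‖ ^ p)
        = (1/(n:ℝ)) * (Real.cos (π * (1 - p/2)) * (∫ x : ℝ, ‖S z (x:ℂ)‖ ^ p)) := by ring
    _ ≤ (1/(n:ℝ)) * (2 * π * n * (M z) ^ (p-1)) := mul_le_mul_of_nonneg_left h hninv
    _ = 2 * π * (M z) ^ (p-1) := by field_simp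
  · intro p hp2
    have hM0 := M_pos hn hb
    have base := master hn hb (p := 2) one_lt_two le_rfl
    have hc : Real.cos (π * (1 - 2/2)) = 1 := by norm_num
    have hm1 : (M z) ^ ((2:ℝ)-1) = M z := by norm_num
    rw [hc, hm1, one_mul] at base
    -- pointwise comparison
    have hpt : ∀ x : ℝ, ‖S z (x:ℂ)‖ ^ p ≤ (M z)^(p-2) * ‖S z (x:ℂ)‖ ^ (2:ℝ) := by
      intro x
      have hr0 : 0 < ‖S z (x:ℂ)‖ := norm_pos_iff.mpr (S_ne_zero hn hb (by simp))
      have heq : ‖S z (x:ℂ)‖ ^ p = ‖S z (x:ℂ)‖^(p-2) * ‖S z (x:ℂ)‖ ^ (2:ℝ) := by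
        rw [← Real.rpow_add hr0]; norm_num
      rw [heq]
      apply mul_le_mul_of_nonneg_right
        (Real.rpow_le_rpow (le_of_lt hr0) (le_M hb x) (by linarith))
        (Real.rpow_nonneg (norm_nonneg _) _)
    have hint : (∫ x : ℝ, ‖S z (x:ℂ)‖ ^ p) ≤ (M z)^(p-2) * ∫ x : ℝ, ‖S z (x:ℂ)‖ ^ (2:ℝ) := by
      have := MeasureTheory.integral_mono (integrable_norm_S_rpow hb (by linarith))
        ((integrable_norm_S_rpow hb one_lt_two).const_mul ((M z)^(p-2))) hpt
      rwa [MeasureTheory.integral_const_mul] at this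
    have hMp2 : (0:ℝ) ≤ (M z)^(p-2) := Real.rpow_nonneg (le_of_lt hM0) _
    have hMcomb : (M z)^(p-2) * (M z) = (M z)^(p-1) := by
      rw [← Real.rpow_add_one (ne_of_gt hM0)]; congr 1; ring
    calc (1 / (n:ℝ)) * (∫ x : ℝ, ‖S z (x:ℂ)‖ ^ p)
        ≤ (1/(n:ℝ)) * ((M z)^(p-2) * ∫ x : ℝ, ‖S z (x:ℂ)‖ ^ (2:ℝ)) :=
          mul_le_mul_of_nonneg_left hint hninv
    _ ≤ (1/(n:ℝ)) * ((M z)^(p-2) * (2 * π * n * (M z))) := by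
        apply mul_le_mul_of_nonneg_left _ hninv
        exact mul_le_mul_of_nonneg_left base hMp2
    _ = 2 * π * ((M z)^(p-2) * (M z)) := by field_simp
    _ = 2 * π * (M z) ^ (p-1) := by rw [hMcomb]


end SPF15

theorem stmt15
    (n : ℕ) (hn : 1 ≤ n) (z : Fin n → ℂ)
    (ρ : ℂ → ℂ) (hρ : ∀ w, ρ w = ∑ k, 1 / (w - z k))
    (hz : (∀ k, 0 < (z k).im) ∨ (∀ k, (z k).im < 0)) :
    (∀ p : ℝ, 1 < p → p ≤ 2 →
      (1 / (n:ℝ)) * Real.cos (Real.pi * (1 - p/2)) * (∫ x : ℝ, ‖ρ (x:ℂ)‖ ^ p) ≤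
        2 * Real.pi * (sSup (Set.range fun x : ℝ => ‖ρ (x:ℂ)‖)) ^ (p - 1)) ∧
    (∀ p : ℝ, 2 ≤ p →
      (1 / (n:ℝ)) * (∫ x : ℝ, ‖ρ (x:ℂ)‖ ^ p) ≤
        2 * Real.pi * (sSup (Set.range fun x : ℝ => ‖ρ (x:ℂ)‖)) ^ (p - 1)) := by
  rcases hz with hb | hb
  · have heq : ∀ x : ℝ, ‖ρ (x:ℂ)‖ = ‖SPF15.S z (x:ℂ)‖ := by
      intro x; rw [hρ]; rfl
    simp only [heq]
    exact SPF15.final hn hb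
  · set z' : Fin n → ℂ := fun k => (starRingEnd ℂ) (z k) with hz'
    have hb' : ∀ k, 0 < (z' k).im := by
      intro k
      have := hb k
      simp only [hz', Complex.conj_im]
      linarith
    have heq : ∀ x : ℝ, ‖ρ (x:ℂ)‖ = ‖SPF15.S z' (x:ℂ)‖ := by
      intro x
      rw [hρ]
      rw [show ‖∑ k, 1 / ((x:ℂ) - z k)‖ = ‖(starRingEnd ℂ) (∑ k, 1 / ((x:ℂ) - z k))‖ from
        (RCLike.norm_conj _).symm]
      congr 1
      rw [map_sum]
      apply Finset.sum_congr rfl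
      intro k _
      rw [map_div₀, map_one, map_sub, Complex.conj_ofReal]
    simp only [heq]
    exact SPF15.final hn hb'


end
end

section
/- Let n≥1, α∈(0,π/2), and let ρ_n(z)=Σ_{k=1}^n 1/(z−z_k) be a simple partial fraction whose poles are z_k = r_k e^{iφ_k} with r_k>0 and φ_k∈(π−α, π+α) for all k. Then for every m∈ℕ, m≥1: (sup_{x≥0}|ρ_n(x)|)^{2m−1/2} ≤ ( Σ_{k=1}^n 1/r_k )^{2m−1/2} ≤ ( 2√n / cos^{2m}α ) · (m/π) · ∫_0^∞ |ρ_n(x)|^{2m} x^{−1/2} dx. -/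
open Complex MeasureTheory Polynomial Real Set Filter Topology

set_option maxHeartbeats 1000000

noncomputable section


lemma auxInt {F : ℝ → ℝ} {A B p : ℝ} (hp : p < -1)
    (hmeas : AEStronglyMeasurable F (volume.restrict (Set.Ioi 0)))
    (h0 : ∀ x ∈ Set.Ioi (0:ℝ), 0 ≤ F x)
    (h1 : ∀ x ∈ Set.Ioc (0:ℝ) 1, F x ≤ A * x ^ (-(1:ℝ)/2))
    (h2 : ∀ x ∈ Set.Ioi (1:ℝ), F x ≤ B * x ^ p) :
    MeasureTheory.IntegrableOn F (Set.Ioi (0:ℝ)) := by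
  have hunion : Set.Ioc (0:ℝ) 1 ∪ Set.Ioi 1 = Set.Ioi 0 := Set.Ioc_union_Ioi_eq_Ioi zero_le_one
  rw [← hunion]
  have hm1 : AEStronglyMeasurable F (volume.restrict (Set.Ioc (0:ℝ) 1)) :=
    hmeas.mono_measure (Measure.restrict_mono (by rw [← hunion]; exact Set.subset_union_left) le_rfl)
  have hm2 : AEStronglyMeasurable F (volume.restrict (Set.Ioi (1:ℝ))) :=
    hmeas.mono_measure (Measure.restrict_mono (by rw [← hunion]; exact Set.subset_union_right) le_rfl)
  apply MeasureTheory.IntegrableOn.union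
  · have hbase0 : MeasureTheory.IntegrableOn (fun x : ℝ => x ^ (-(1:ℝ)/2)) (Set.Ioc (0:ℝ) 1) :=
      (intervalIntegrable_iff_integrableOn_Ioc_of_le zero_le_one).1
        (intervalIntegral.intervalIntegrable_rpow' (r := -(1:ℝ)/2) (by norm_num))
    apply MeasureTheory.Integrable.mono' (hbase0.const_mul A) hm1
    rw [ae_restrict_iff' measurableSet_Ioc]
    refine ae_of_all _ fun x hx => ?_
    rw [Real.norm_eq_abs, _root_.abs_of_nonneg (h0 x hx.1)]
    exact h1 x hx
  · have hbase : MeasureTheory.IntegrableOn (fun x : ℝ => B * x ^ p) (Set.Ioi (1:ℝ)) :=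
      (integrableOn_Ioi_rpow_of_lt hp zero_lt_one).const_mul B
    apply MeasureTheory.Integrable.mono' hbase hm2
    rw [ae_restrict_iff' measurableSet_Ioi]
    refine ae_of_all _ fun x hx => ?_
    rw [Real.norm_eq_abs, _root_.abs_of_nonneg (h0 x (Set.mem_Ioi.2 (lt_trans zero_lt_one (Set.mem_Ioi.1 hx))))]
    exact h2 x hx



lemma sqrtAtTop : Filter.Tendsto Real.sqrt atTop atTop := by
  refine Filter.tendsto_atTop_atTop.2 fun b => ⟨max (b^2) 0, fun a ha => ?_⟩
  calc b ≤ |b| := le_abs_self b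
  _ = Real.sqrt (b^2) := (Real.sqrt_sq_eq_abs b).symm
  _ ≤ Real.sqrt a := Real.sqrt_le_sqrt (le_trans (le_max_left (b^2) 0) ha)

lemma auxBeta {S : ℝ} (hS : 0 < S) :
    ∫ x in Set.Ioi (0:ℝ), x ^ (-(1:ℝ)/2) / (1 + S*x)^2
      = Real.pi/2 * S ^ (-(1:ℝ)/2) := by
  set g : ℝ → ℝ := fun x => Real.arctan (Real.sqrt (S*x)) / Real.sqrt S + Real.sqrt x / (1+S*x)
    with hg
  have hSs : (0:ℝ) < Real.sqrt S := Real.sqrt_pos.2 hS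
  have hderiv : ∀ x ∈ Set.Ioi (0:ℝ), HasDerivAt g (x ^ (-(1:ℝ)/2) / (1 + S*x)^2) x := by
    intro x hx
    have hx0 : (0:ℝ) < x := hx
    have hSx : (0:ℝ) < S * x := mul_pos hS hx0
    have hden : (0:ℝ) < 1 + S * x := by linarith
    have h1 : HasDerivAt (fun y : ℝ => S * y) S x := by
      simpa using (hasDerivAt_id x).const_mul S
    have h2 : HasDerivAt (fun y : ℝ => Real.sqrt (S*y)) (1 / (2 * Real.sqrt (S*x)) * S) x :=
      (Real.hasDerivAt_sqrt hSx.ne').comp x h1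
    have h3 : HasDerivAt (fun y : ℝ => Real.arctan (Real.sqrt (S*y)))
        (1 / (1 + Real.sqrt (S*x)^2) * (1 / (2 * Real.sqrt (S*x)) * S)) x :=
      (Real.hasDerivAt_arctan _).comp x h2
    have h4 : HasDerivAt (fun y : ℝ => Real.arctan (Real.sqrt (S*y)) / Real.sqrt S)
        (1 / (1 + Real.sqrt (S*x)^2) * (1 / (2 * Real.sqrt (S*x)) * S) / Real.sqrt S) x :=
      h3.div_const _
    have h5 : HasDerivAt (fun y : ℝ => 1 + S * y) S x := by
      simpa using (h1.const_add 1)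
    have h6 : HasDerivAt (fun y : ℝ => Real.sqrt y / (1+S*y))
        ((1 / (2 * Real.sqrt x) * (1 + S*x) - Real.sqrt x * S) / (1 + S*x)^2) x :=
      (Real.hasDerivAt_sqrt hx0.ne').div h5 hden.ne'
    have htot := h4.add h6
    refine htot.congr_deriv ?_
    have hxs : (0:ℝ) < Real.sqrt x := Real.sqrt_pos.2 hx0
    obtain ⟨u, hu, rfl⟩ : ∃ u : ℝ, 0 < u ∧ x = u^2 :=
      ⟨Real.sqrt x, hxs, (Real.sq_sqrt hx0.le).symm⟩
    obtain ⟨v, hv, rfl⟩ : ∃ v : ℝ, 0 < v ∧ S = v^2 :=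
      ⟨Real.sqrt S, hSs, (Real.sq_sqrt hS.le).symm⟩
    rw [show v^2 * u^2 = (v*u)^2 by ring, Real.sqrt_sq (by positivity), Real.sqrt_sq hu.le,
      Real.sqrt_sq hv.le, neg_div, Real.rpow_neg (by positivity)]
    rw [show ((u^2 : ℝ)) ^ ((1:ℝ)/2) = u from by
      rw [← Real.sqrt_eq_rpow, Real.sqrt_sq hu.le]]
    have hden' : (0:ℝ) < 1 + v^2 * u^2 := by positivity
    field_simp
    ring
  have h_nonneg : ∀ x ∈ Set.Ioi (0:ℝ), 0 ≤ x ^ (-(1:ℝ)/2) / (1 + S*x)^2 := by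
    intro x hx
    have hx0 : (0:ℝ) < x := hx
    positivity
  have hcont : ContinuousWithinAt g (Set.Ici 0) 0 := by
    apply ContinuousAt.continuousWithinAt
    apply ContinuousAt.add
    · exact ((Real.continuous_arctan.comp (Real.continuous_sqrt.comp
        (continuous_const.mul continuous_id))).div_const _).continuousAt
    · exact ContinuousAt.div (Real.continuous_sqrt.continuousAt)
        (by fun_prop) (by norm_num)
  have htend : Tendsto g atTop (𝓝 (Real.pi/2 * S ^ (-(1:ℝ)/2))) := by
    have hS2 : S ^ (-(1:ℝ)/2) = (Real.sqrt S)⁻¹ := by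
      rw [show -(1:ℝ)/2 = -(1/2) by ring, Real.rpow_neg hS.le, ← Real.sqrt_eq_rpow]
    have l1 : Tendsto (fun x : ℝ => Real.arctan (Real.sqrt (S*x)) / Real.sqrt S) atTop
        (𝓝 (Real.pi/2 / Real.sqrt S)) := by
      apply Tendsto.div_const
      apply (Real.tendsto_arctan_atTop.mono_right nhdsWithin_le_nhds).comp
      exact sqrtAtTop.comp (Filter.Tendsto.const_mul_atTop hS tendsto_id)
    have l2 : Tendsto (fun x : ℝ => Real.sqrt x / (1+S*x)) atTop (𝓝 0) := by
      apply squeeze_zero' (g := fun x : ℝ => (S * Real.sqrt x)⁻¹)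
      · filter_upwards [eventually_gt_atTop 0] with x hx
        positivity
      · filter_upwards [eventually_gt_atTop 0] with x hx
        have hxs : (0:ℝ) < Real.sqrt x := Real.sqrt_pos.2 hx
        have hden : (0:ℝ) < 1 + S * x := by positivity
        rw [inv_eq_one_div, div_le_div_iff₀ hden (by positivity)]
        have hms : Real.sqrt x * Real.sqrt x = x := Real.mul_self_sqrt hx.le
        nlinarith [hxs, hms]
      · have : Tendsto (fun x : ℝ => S * Real.sqrt x) atTop atTop :=
          Filter.Tendsto.const_mul_atTop hS sqrtAtTop
        exact this.inv_tendsto_atTop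
    have heq : Real.pi/2 * S ^ (-(1:ℝ)/2) = Real.pi/2/Real.sqrt S + 0 := by rw [hS2]; ring
    rw [heq]
    exact l1.add l2
  rw [integral_Ioi_of_hasDerivAt_of_nonneg hcont hderiv h_nonneg htend]
  simp [hg]





lemma auxKey {S : ℝ} (hS : 0 < S) (m : ℕ) (hm : 1 ≤ m) :
    MeasureTheory.IntegrableOn (fun x : ℝ => x ^ (-(1:ℝ)/2) / (1+S*x)^(2*m)) (Set.Ioi 0) ∧
    Real.pi/(2*m) * S ^ (-(1:ℝ)/2) ≤
      ∫ x in Set.Ioi (0:ℝ), x ^ (-(1:ℝ)/2) / (1+S*x)^(2*m) := by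
  have hFc : ContinuousOn (fun x : ℝ => x ^ (-(1:ℝ)/2) / (1+S*x)^(2*m)) (Set.Ioi 0) := by
    apply ContinuousOn.div
    · exact fun x hx => (Real.continuousAt_rpow_const x _ (Or.inl (ne_of_gt hx))).continuousWithinAt
    · fun_prop
    · intro x hx
      have hx0 : (0:ℝ) < x := hx
      positivity
  have hint : MeasureTheory.IntegrableOn
      (fun x : ℝ => x ^ (-(1:ℝ)/2) / (1+S*x)^(2*m)) (Set.Ioi 0) := by
    have hm' : (1:ℝ) ≤ (m:ℝ) := by exact_mod_cast hm
    apply auxInt (A := 1) (B := (S^(2*m))⁻¹) (p := -(1:ℝ)/2 - 2*m)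
      (by linarith) (hFc.aestronglyMeasurable measurableSet_Ioi)
    · intro x hx
      have hx0 : (0:ℝ) < x := hx
      positivity
    · intro x hx
      have hx0 : (0:ℝ) < x := hx.1
      have hd : (1:ℝ) ≤ (1+S*x)^(2*m) := one_le_pow₀ (by nlinarith)
      rw [one_mul]
      exact div_le_self (by positivity) hd
    · intro x hx
      have hx1 : (1:ℝ) < x := hx
      have hx0 : (0:ℝ) < x := lt_trans zero_lt_one hx1
      have hd : (S*x)^(2*m) ≤ (1+S*x)^(2*m) :=
        pow_le_pow_left₀ (by positivity) (by linarith) _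
      have hd0 : (0:ℝ) < (S*x)^(2*m) := by positivity
      calc x ^ (-(1:ℝ)/2) / (1+S*x)^(2*m) ≤ x ^ (-(1:ℝ)/2) / (S*x)^(2*m) := by
            apply div_le_div_of_nonneg_left (by positivity) hd0 hd
        _ = (S^(2*m))⁻¹ * x ^ (-(1:ℝ)/2 - 2*m) := by
            rw [Real.rpow_sub hx0, mul_pow, ← Real.rpow_natCast x (2*m)]
            push_cast
            ring
  refine ⟨hint, ?_⟩
  rcases eq_or_lt_of_le hm with h1 | h2
  · -- m = 1
    subst h1
    have hB := auxBeta hS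
    norm_num at hB ⊢
    rw [hB]
  · -- m ≥ 2
    have hm2 : 2 ≤ m := h2
    set b : ℝ := 2*m*S with hb
    have hb0 : (0:ℝ) < b := by positivity
    have hIexp : ∫ x in Set.Ioi (0:ℝ), x ^ (-(1:ℝ)/2) * Real.exp (-b * x ^ (1:ℝ))
        = b ^ (-(1:ℝ)/2) * Real.sqrt Real.pi := by
      rw [integral_rpow_mul_exp_neg_mul_rpow one_pos (by norm_num) hb0]
      norm_num [Real.Gamma_one_half_eq]
    have hmono : ∀ x ∈ Set.Ioi (0:ℝ),
        x ^ (-(1:ℝ)/2) * Real.exp (-b * x ^ (1:ℝ)) ≤ x ^ (-(1:ℝ)/2) / (1+S*x)^(2*m) := by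
      intro x hx
      have hx0 : (0:ℝ) < x := hx
      rw [Real.rpow_one]
      have h1 : (1+S*x)^(2*m) ≤ Real.exp (b*x) := by
        calc (1+S*x)^(2*m) ≤ (Real.exp (S*x))^(2*m) := by
              apply pow_le_pow_left₀ (by positivity) _ _
              linarith [Real.add_one_le_exp (S*x)]
          _ = Real.exp (b*x) := by
              rw [← Real.exp_nat_mul]; congr 1; push_cast [hb]; ring
      have h2 : Real.exp (-b*x) ≤ ((1+S*x)^(2*m))⁻¹ := by
        rw [neg_mul, Real.exp_neg]
        exact inv_anti₀ (by positivity) h1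
      rw [div_eq_mul_inv]
      exact mul_le_mul_of_nonneg_left h2 (by positivity)
    have hintexp : MeasureTheory.IntegrableOn
        (fun x : ℝ => x ^ (-(1:ℝ)/2) * Real.exp (-b * x ^ (1:ℝ))) (Set.Ioi 0) :=
      integrableOn_rpow_mul_exp_neg_mul_rpow (by norm_num) one_pos hb0
    have hle := setIntegral_mono_on hintexp hint measurableSet_Ioi hmono
    rw [hIexp] at hle
    refine le_trans ?_ hle
    have hsplit : b ^ (-(1:ℝ)/2) = (2*(m:ℝ)) ^ (-(1:ℝ)/2) * S ^ (-(1:ℝ)/2) := by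
      rw [hb, Real.mul_rpow (by positivity) hS.le]
    rw [hsplit]
    have hm' : (2:ℝ) ≤ (m:ℝ) := by exact_mod_cast hm2
    set t : ℝ := 2*(m:ℝ) with htdef
    have ht4 : (4:ℝ) ≤ t := by rw [htdef]; linarith
    have ht0 : (0:ℝ) < t := by linarith
    have key : Real.pi / t ≤ t ^ (-(1:ℝ)/2) * Real.sqrt Real.pi := by
      rw [show -(1:ℝ)/2 = -(1/2) by norm_num, Real.rpow_neg ht0.le, ← Real.sqrt_eq_rpow]
      have hts : (0:ℝ) < Real.sqrt t := Real.sqrt_pos.2 ht0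
      rw [div_le_iff₀ ht0, inv_mul_eq_div, div_mul_eq_mul_div, le_div_iff₀ hts]
      have hca : Real.sqrt Real.pi ≤ Real.sqrt t :=
        Real.sqrt_le_sqrt (by linarith [Real.pi_le_four])
      nlinarith [mul_nonneg (mul_nonneg (Real.sqrt_nonneg Real.pi) (Real.sqrt_nonneg t))
          (sub_nonneg.2 hca),
        Real.sq_sqrt Real.pi_pos.le, Real.sq_sqrt ht0.le]
    calc Real.pi/(2*(m:ℝ)) * S ^ (-(1:ℝ)/2) = Real.pi/t * S ^ (-(1:ℝ)/2) := rfl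
      _ ≤ (t ^ (-(1:ℝ)/2) * Real.sqrt Real.pi) * S ^ (-(1:ℝ)/2) := by
          apply mul_le_mul_of_nonneg_right key (Real.rpow_nonneg hS.le _)
      _ = t ^ (-(1:ℝ)/2) * S ^ (-(1:ℝ)/2) * Real.sqrt Real.pi := by ring





theorem stmt18
    (n : ℕ) (hn : 1 ≤ n) (α : ℝ) (hα : α ∈ Set.Ioo 0 (Real.pi / 2))
    (rk : Fin n → ℝ) (φk : Fin n → ℝ)
    (hrk : ∀ k, 0 < rk k) (hφk : ∀ k, φk k ∈ Set.Ioo (Real.pi - α) (Real.pi + α))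
    (z : Fin n → ℂ) (hz : ∀ k, z k = (rk k : ℂ) * Complex.exp (φk k * Complex.I))
    (ρ : ℂ → ℂ) (hρ : ∀ w, ρ w = ∑ k, 1 / (w - z k))
    (m : ℕ) (hm : 1 ≤ m) :
    (sSup ((fun x : ℝ => ‖ρ (x:ℂ)‖) '' Set.Ici 0)) ^ (2 * (m:ℝ) - 1/2) ≤
        (∑ k, 1 / rk k) ^ (2 * (m:ℝ) - 1/2) ∧
      (∑ k, 1 / rk k) ^ (2 * (m:ℝ) - 1/2) ≤
        (2 * Real.sqrt n / (Real.cos α) ^ (2 * m)) * ((m:ℝ) / Real.pi) *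
          ∫ x in Set.Ioi (0:ℝ), ‖ρ (x:ℂ)‖ ^ (2 * m) * x ^ (-(1:ℝ)/2) := by
  obtain ⟨hα0, hαπ⟩ := hα
  simp only [hρ]
  set c : ℝ := Real.cos α with hcdef
  have hc0 : 0 < c := Real.cos_pos_of_mem_Ioo ⟨by linarith, hαπ⟩
  have hc1 : c ≤ 1 := Real.cos_le_one α
  set S : ℝ := ∑ k, 1 / rk k with hSdef
  have hS : 0 < S := Finset.sum_pos (fun k _ => by have := hrk k; positivity)
    ⟨⟨0, hn⟩, Finset.mem_univ _⟩
  have hm' : (1:ℝ) ≤ (m:ℝ) := by exact_mod_cast hm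
  have hexp0 : (0:ℝ) ≤ 2 * (m:ℝ) - 1/2 := by linarith
  -- facts about z k
  have hnormz : ∀ k, ‖z k‖ = rk k := by
    intro k
    rw [hz k, norm_mul, Complex.norm_real,
      Complex.norm_exp_ofReal_mul_I, mul_one, Real.norm_eq_abs, abs_of_pos (hrk k)]
  have hre : ∀ k, (z k).re = rk k * Real.cos (φk k) := by
    intro k
    rw [hz k]
    simp [Complex.mul_re, Complex.exp_ofReal_mul_I_re]
  have hcosφ : ∀ k, Real.cos (φk k) ≤ -c := by
    intro k
    obtain ⟨h1, h2⟩ := hφk k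
    have habs : |φk k - Real.pi| ≤ α := by
      rw [abs_le]; constructor <;> linarith
    have hcc : c ≤ Real.cos (φk k - Real.pi) := by
      rw [← Real.cos_abs]
      exact Real.cos_le_cos_of_nonneg_of_le_pi (abs_nonneg _)
        (by linarith [Real.pi_pos]) habs
    have heq : Real.cos (φk k - Real.pi) = - Real.cos (φk k) := by
      rw [show φk k - Real.pi = -(Real.pi - φk k) by ring, Real.cos_neg, Real.cos_pi_sub]
    linarith [heq ▸ hcc]
  have hrez : ∀ k, (z k).re ≤ -(rk k * c) := by
    intro k
    rw [hre k]
    have := hcosφ k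
    nlinarith [hrk k]
  -- squared norm identity
  have hsq : ∀ (k) (x : ℝ), ‖(x:ℂ) - z k‖^2 = x^2 - 2*x*(z k).re + (rk k)^2 := by
    intro k x
    have h1 : (rk k)^2 = (z k).re^2 + (z k).im^2 := by
      have := hnormz k
      rw [← this, Complex.sq_norm, Complex.normSq_apply]; ring
    rw [Complex.sq_norm, Complex.normSq_apply, Complex.sub_re,
      Complex.sub_im, Complex.ofReal_re, Complex.ofReal_im]
    linear_combination -h1
  -- lower bound on norm of x - z k
  have hzr' : ∀ k, 0 ≤ -(z k).re := by
    intro k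
    have := hrez k
    nlinarith [mul_pos (hrk k) hc0]
  have key1 : ∀ (k) (x : ℝ), 0 ≤ x → rk k ≤ ‖(x:ℂ) - z k‖ := by
    intro k x hx
    have h := hsq k x
    nlinarith [norm_nonneg ((x:ℂ) - z k), hrk k, mul_nonneg hx (hzr' k)]
  have key1' : ∀ (k) (x : ℝ), 0 ≤ x → x ≤ ‖(x:ℂ) - z k‖ := by
    intro k x hx
    have h := hsq k x
    nlinarith [norm_nonneg ((x:ℂ) - z k), hrk k, mul_nonneg hx (hzr' k)]
  have hne : ∀ (k) (x : ℝ), 0 ≤ x → (x:ℂ) - z k ≠ 0 := by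
    intro k x hx
    have := key1 k x hx
    intro h
    rw [h, norm_zero] at this
    linarith [hrk k]
  have key2 : ∀ (k) (x : ℝ), 0 ≤ x → ‖(x:ℂ) - z k‖ ≤ x + rk k := by
    intro k x hx
    calc ‖(x:ℂ) - z k‖ ≤ ‖(x:ℂ)‖ + ‖z k‖ := norm_sub_le _ _
      _ = x + rk k := by rw [hnormz k, Complex.norm_real, Real.norm_eq_abs, _root_.abs_of_nonneg hx]
  -- upper bound for sup
  have hub : ∀ x : ℝ, 0 ≤ x → ‖∑ k, 1 / ((x:ℂ) - z k)‖ ≤ S := by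
    intro x hx
    refine le_trans (norm_sum_le _ _) ?_
    rw [hSdef]
    apply Finset.sum_le_sum
    intro k _
    rw [norm_div, norm_one]
    exact one_div_le_one_div_of_le (hrk k) (key1 k x hx)
  constructor
  · -- part 1
    apply Real.rpow_le_rpow
    · apply Real.sSup_nonneg
      rintro y ⟨x, hx, rfl⟩
      exact norm_nonneg _
    · apply Real.sSup_le
      · rintro y ⟨x, hx, rfl⟩
        exact hub x hx
      · exact hS.le
    · exact hexp0
  · -- part 2
    have key3 : ∀ x : ℝ, 0 ≤ x → c * S / (1 + S*x) ≤ ‖∑ k, 1/((x:ℂ) - z k)‖ := by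
      intro x hx
      have hre_term : ∀ k, c/(x + rk k) ≤ (1/((x:ℂ) - z k)).re := by
        intro k
        have hrk0 := hrk k
        have hrkx : (0:ℝ) < x + rk k := by linarith
        have hwre : ((x:ℂ) - z k).re = x - (z k).re := by simp
        have hnum : c * (x + rk k) ≤ x - (z k).re := by
          have := hrez k; nlinarith
        have hnum0 : (0:ℝ) ≤ x - (z k).re := le_trans (by positivity) hnum
        have hnsq : Complex.normSq ((x:ℂ) - z k) ≤ (x + rk k)^2 := by
          rw [← Complex.sq_norm]
          nlinarith [key2 k x hx, norm_nonneg ((x:ℂ) - z k)]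
        have hnsq0 : 0 < Complex.normSq ((x:ℂ) - z k) := Complex.normSq_pos.2 (hne k x hx)
        rw [one_div, Complex.inv_re, hwre]
        calc c/(x + rk k) = c * (x + rk k)/(x + rk k)^2 := by field_simp
          _ ≤ (x - (z k).re)/(x + rk k)^2 := (div_le_div_iff_of_pos_right (by positivity)).2 hnum
          _ ≤ (x - (z k).re)/Complex.normSq ((x:ℂ) - z k) :=
              div_le_div_of_nonneg_left hnum0 hnsq0 hnsq
      have hsum1 : ∑ k, c/(x + rk k) ≤ (∑ k, 1/((x:ℂ) - z k)).re := by
        rw [Complex.re_sum]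
        exact Finset.sum_le_sum (fun k _ => hre_term k)
      have hsum2 : c * S / (1 + S*x) ≤ ∑ k, c/(x + rk k) := by
        have hper : ∀ k : Fin n, c * (1/rk k) / (1 + S*x) ≤ c/(x + rk k) := by
          intro k
          have hrk0 := hrk k
          have h1k : 1/rk k ≤ S := by
            rw [hSdef]
            exact Finset.single_le_sum (f := fun j => 1/rk j)
              (fun j _ => by have := hrk j; positivity) (Finset.mem_univ k)
          rw [div_le_div_iff₀ (by positivity) (by positivity)]
          have e : (1/rk k) * (rk k) = 1 := by field_simp
          have hprod : c * ((1/rk k) * x) ≤ c * (S * x) :=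
            mul_le_mul_of_nonneg_left (mul_le_mul_of_nonneg_right h1k hx) hc0.le
          nlinarith [e, hprod]
        calc c*S/(1+S*x) = ∑ k, c * (1/rk k)/(1+S*x) := by
              rw [hSdef, Finset.mul_sum, Finset.sum_div]
          _ ≤ ∑ k, c/(x+rk k) := Finset.sum_le_sum (fun k _ => hper k)
      calc c*S/(1+S*x) ≤ (∑ k, 1/((x:ℂ)-z k)).re := le_trans hsum2 hsum1
        _ ≤ ‖∑ k, 1/((x:ℂ)-z k)‖ := by
            exact Complex.re_le_norm _
    set F : ℝ → ℝ := fun x => ‖∑ k, 1/((x:ℂ) - z k)‖^(2*m) * x ^ (-(1:ℝ)/2) with hFdef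
    have hFmeas : ContinuousOn F (Set.Ioi 0) := by
      apply ContinuousOn.mul
      · apply ContinuousOn.pow
        apply ContinuousOn.norm
        apply continuousOn_finset_sum
        intro k _
        apply ContinuousOn.div continuousOn_const
        · exact Complex.continuous_ofReal.continuousOn.sub continuousOn_const
        · intro x hx
          exact hne k x (le_of_lt hx)
      · exact fun x hx =>
          (Real.continuousAt_rpow_const x _ (Or.inl (ne_of_gt hx))).continuousWithinAt
    have hFint : MeasureTheory.IntegrableOn F (Set.Ioi 0) := by
      apply auxInt (A := S^(2*m)) (B := (n:ℝ)^(2*m)) (p := -(1:ℝ)/2 - 2*m)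
        (by linarith) (hFmeas.aestronglyMeasurable measurableSet_Ioi)
      · intro x hx
        have hx0 : (0:ℝ) < x := hx
        rw [hFdef]
        positivity
      · intro x hx
        have hx0 : (0:ℝ) < x := hx.1
        rw [hFdef]
        apply mul_le_mul_of_nonneg_right _ (Real.rpow_nonneg hx0.le _)
        exact pow_le_pow_left₀ (norm_nonneg _) (hub x hx0.le) _
      · intro x hx
        have hx1 : (1:ℝ) < x := hx
        have hx0 : (0:ℝ) < x := lt_trans zero_lt_one hx1
        have hub2 : ‖∑ k, 1/((x:ℂ) - z k)‖ ≤ (n:ℝ)/x := by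
          refine le_trans (norm_sum_le _ _) ?_
          have : ∀ k : Fin n, ‖1/((x:ℂ) - z k)‖ ≤ 1/x := by
            intro k
            rw [norm_div, norm_one]
            exact one_div_le_one_div_of_le hx0 (key1' k x hx0.le)
          refine le_trans (Finset.sum_le_sum (fun k _ => this k)) ?_
          rw [Finset.sum_const, Finset.card_univ, Fintype.card_fin, nsmul_eq_mul]
          apply le_of_eq
          ring
        calc F x ≤ ((n:ℝ)/x)^(2*m) * x ^ (-(1:ℝ)/2) := by
              rw [hFdef]
              exact mul_le_mul_of_nonneg_right
                (pow_le_pow_left₀ (norm_nonneg _) hub2 _) (Real.rpow_nonneg hx0.le _)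
          _ = (n:ℝ)^(2*m) * x ^ (-(1:ℝ)/2 - 2*m) := by
              rw [Real.rpow_sub hx0, div_pow, ← Real.rpow_natCast x (2*m)]
              push_cast
              ring
    have hlow : ∀ x ∈ Set.Ioi (0:ℝ),
        (c*S)^(2*m) * (x ^ (-(1:ℝ)/2)/(1+S*x)^(2*m)) ≤ F x := by
      intro x hx
      have hx0 : (0:ℝ) < x := hx
      have h := key3 x hx0.le
      have hden : (0:ℝ) < 1 + S*x := by positivity
      have hp : (c*S/(1+S*x))^(2*m) ≤ ‖∑ k, 1/((x:ℂ) - z k)‖^(2*m) :=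
        pow_le_pow_left₀ (by positivity) h _
      calc (c*S)^(2*m) * (x ^ (-(1:ℝ)/2)/(1+S*x)^(2*m))
          = (c*S/(1+S*x))^(2*m) * x ^ (-(1:ℝ)/2) := by
            rw [div_pow]; ring
        _ ≤ ‖∑ k, 1/((x:ℂ) - z k)‖^(2*m) * x ^ (-(1:ℝ)/2) :=
            mul_le_mul_of_nonneg_right hp (Real.rpow_nonneg hx0.le _)
        _ = F x := rfl
    obtain ⟨hgint, hgval⟩ := auxKey hS m hm
    have hIlow := setIntegral_mono_on (hgint.const_mul ((c*S)^(2*m))) hFint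
      measurableSet_Ioi hlow
    rw [MeasureTheory.integral_const_mul] at hIlow
    have hIlow2 : (c*S)^(2*m) * (Real.pi/(2*m) * S ^ (-(1:ℝ)/2))
        ≤ ∫ x in Set.Ioi (0:ℝ), F x :=
      le_trans (mul_le_mul_of_nonneg_left hgval (by positivity)) hIlow
    have hsqrtn : 1 ≤ Real.sqrt n := by
      rw [show (1:ℝ) = Real.sqrt 1 by simp]
      exact Real.sqrt_le_sqrt (by exact_mod_cast hn)
    have hK0 : (0:ℝ) < (2 * Real.sqrt n / c^(2*m)) * ((m:ℝ)/Real.pi) := by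
      have := Real.pi_pos
      positivity
    calc S ^ (2*(m:ℝ) - 1/2) = S^(2*m) * S ^ (-(1:ℝ)/2) := by
          rw [← Real.rpow_natCast S (2*m), ← Real.rpow_add hS]
          congr 1
          push_cast
          ring
      _ ≤ Real.sqrt n * (S^(2*m) * S ^ (-(1:ℝ)/2)) := le_mul_of_one_le_left (by positivity) hsqrtn
      _ = (2 * Real.sqrt n / c^(2*m)) * ((m:ℝ)/Real.pi) *
            ((c*S)^(2*m) * (Real.pi/(2*m) * S ^ (-(1:ℝ)/2))) := by
          rw [mul_pow]
          have hπ := Real.pi_ne_zero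
          have hm0 : (m:ℝ) ≠ 0 := by linarith
          have hcpow : c^(2*m) ≠ 0 := by positivity
          field_simp
      _ ≤ (2 * Real.sqrt n / c^(2*m)) * ((m:ℝ)/Real.pi) * ∫ x in Set.Ioi (0:ℝ), F x :=
          mul_le_mul_of_nonneg_left hIlow2 hK0.le

end
end
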